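/- Every n-dimensional opetopic sequence N_0 → N_1 → … → N_n is isomorphic, as a sequence of opetopic networks and constellations, to the sequence G_0^−(⟨K⟩) → G_1^−(⟨K⟩) → … → G_n^−(⟨K⟩) for some n-dimensional opetopic directed complex K; moreover K is reduced if and only if the given sequence is an n-dimensional opetope (i.e., every N_q is reduced). -/

import Mathlib

open Finsupp

/-- A free augmented directed complex, encoded by its distinguished graded basis:
`B` is the set of basis elements, `dim` the dimension function, `bd a` the boundary
chain of a basis element `a`, and `eps` the augmentation (supported in dimension 0). -/
structure FADC where
  B : Type
  dim : B → ℕ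
  bd : B → (B →₀ ℤ)
  eps : B → ℤ
  bd_dim : ∀ a b, b ∈ (bd a).support → dim b + 1 = dim a
  eps_dim : ∀ b, 0 < dim b → eps b = 0
  bd_bd : ∀ a : B, ((bd a).sum fun b n => n • bd b) = 0
  eps_bd : ∀ a : B, ((bd a).sum fun b n => n * eps b) = 0

namespace FADC

variable (K : FADC)

/-- The boundary homomorphism `∂`, extended to chains. -/
noncomputable def bdc (c : K.B →₀ ℤ) : K.B →₀ ℤ := c.sum fun b n => n • K.bd b

/-- The augmentation `ε`, extended to chains. -/
noncomputable def epsc (c : K.B →₀ ℤ) : ℤ := c.sum fun b n => n * K.eps b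

/-- `∂⁺c`, the positive part of `∂c`. -/
noncomputable def bdp (c : K.B →₀ ℤ) : K.B →₀ ℤ := (K.bdc c).mapRange (fun n => max n 0) (by simp)

/-- `∂⁻c`, the negative part of `∂c`. -/
noncomputable def bdm (c : K.B →₀ ℤ) : K.B →₀ ℤ := (-K.bdc c).mapRange (fun n => max n 0) (by simp)

/-- `K` is unital if `ε((∂⁻)^q a) = ε((∂⁺)^q a) = 1` for every `q`-dimensional
basis element `a`. -/
def Unital : Prop := ∀ a : K.B,
  K.epsc (K.bdm^[K.dim a] (Finsupp.single a 1)) = 1 ∧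
  K.epsc (K.bdp^[K.dim a] (Finsupp.single a 1)) = 1

/-- `K` is loop-free if its basis elements admit a (strict) partial order such that
for every basis element `a` and every `r > 0`, the basis elements occurring in
`(∂⁻)^r a` strictly precede those occurring in `(∂⁺)^r a`. -/
def LoopFree : Prop :=
  ∃ lt : K.B → K.B → Prop, IsStrictOrder K.B lt ∧
    ∀ (a : K.B) (r : ℕ), 0 < r →
      ∀ b ∈ (K.bdm^[r] (Finsupp.single a 1)).support,
        ∀ b' ∈ (K.bdp^[r] (Finsupp.single a 1)).support, lt b b'

/-- `K` is atomic of dimension `n`. -/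
def Atomic (n : ℕ) : Prop :=
  (∀ b : K.B, K.dim b ≤ n) ∧
  (∃! g : K.B, K.dim g = n) ∧
  (∀ b : K.B, K.dim b < n → ∃ a : K.B, K.dim b < K.dim a ∧
    (b ∈ (K.bdm (Finsupp.single a 1)).support ∨ b ∈ (K.bdp (Finsupp.single a 1)).support))

/-- `g_q^α(x)`: given `x_q^- = xq` and `x_{q+1}^α = c`, this is
`x_q^- + ∂⁺a_1 + … + ∂⁺a_k` where `a_1, …, a_k` are the terms of `c`. -/
noncomputable def gch (xq c : K.B →₀ ℤ) : K.B →₀ ℤ :=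
  xq + c.sum fun b n => n • K.bdp (Finsupp.single b 1)

/-- The negative chains `⟨K⟩_q^- = (∂⁻)^{n-q} g` of the canonical atom. -/
noncomputable def atomNeg (g : K.B) (n q : ℕ) : K.B →₀ ℤ :=
  if q ≤ n then K.bdm^[n - q] (Finsupp.single g 1) else 0

/-- The positive chains `⟨K⟩_q^+ = (∂⁺)^{n-q} g` of the canonical atom. -/
noncomputable def atomPos (g : K.B) (n q : ℕ) : K.B →₀ ℤ :=
  if q ≤ n then K.bdp^[n - q] (Finsupp.single g 1) else 0

end FADC

/-- Membership in `νK`: the double sequence `(x_0^-, x_0^+ | x_1^-, x_1^+ | …)`,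
given by `xm` and `xp`, is a member of `νK`. -/
structure NuMem (K : FADC) (xm xp : ℕ → (K.B →₀ ℤ)) : Prop where
  dim_m : ∀ q, ∀ b ∈ (xm q).support, K.dim b = q
  dim_p : ∀ q, ∀ b ∈ (xp q).support, K.dim b = q
  nonneg_m : ∀ q b, 0 ≤ xm q b
  nonneg_p : ∀ q b, 0 ≤ xp q b
  fin : ∃ n, ∀ q, n < q → xm q = 0 ∧ xp q = 0
  eps_m : K.epsc (xm 0) = 1
  eps_p : K.epsc (xp 0) = 1
  bd_m : ∀ q, K.bdc (xm (q + 1)) = xp q - xm q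
  bd_p : ∀ q, K.bdc (xp (q + 1)) = xp q - xm q

/-- `K` together with the class `thin` of thin basis elements is an
`n`-dimensional opetopic directed complex. -/
structure IsODC (K : FADC) (thin : K.B → Prop) (n : ℕ) : Prop where
  atomic : K.Atomic n
  loopFree : K.LoopFree
  unital : K.Unital
  thin_pos : ∀ b, thin b → 0 < K.dim b
  bdp_basis : ∀ b : K.B, 0 < K.dim b →
    ∃ a : K.B, ¬ thin a ∧ K.bdp (Finsupp.single b 1) = Finsupp.single a 1
  bdm_thin : ∀ b : K.B, thin b →
    ∃ a : K.B, ¬ thin a ∧ K.bdm (Finsupp.single b 1) = Finsupp.single a 1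

/-- An opetopic directed complex is reduced if every thin basis element is `∂⁻a`
for some other basis element `a`. -/
def ODCReduced (K : FADC) (thin : K.B → Prop) : Prop :=
  ∀ b, thin b → ∃ a, a ≠ b ∧ K.bdm (Finsupp.single a 1) = Finsupp.single b 1

/-- A network: finite sets of edges and vertices with partially defined source and
target functions; input edges are those with no source, output edges those with no
target. -/
structure Network where
  E : Type
  V : Type
  finE : Finite E
  finV : Finite V
  src : E → Option V
  tgt : E → Option V

namespace Network

variable (N : Network)

/-- One step of a path: the target of `e` is the source of `e'`. -/
def step (e e' : N.E) : Prop := ∃ v : N.V, N.tgt e = some v ∧ N.src e' = some v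

/-- There is a path from `e` to `e'`. -/
def PathTo (e e' : N.E) : Prop := Relation.ReflTransGen N.step e e'

/-- A network is acyclic if there is no nontrivial path from an edge to itself. -/
def Acyclic : Prop := ∀ e : N.E, ¬ Relation.TransGen N.step e e

/-- A network is linear if it is acyclic and consists of a single path
`e_0, v_1, e_1, …, v_k, e_k`. -/
def Linear : Prop := N.Acyclic ∧
  ∃ (k : ℕ) (e : Fin (k + 1) ≃ N.E) (v : Fin k ≃ N.V),
    N.src (e 0) = none ∧ N.tgt (e (Fin.last k)) = none ∧
    ∀ i : Fin k, N.tgt (e i.castSucc) = some (v i) ∧ N.src (e i.succ) = some (v i)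

/-- A network is confluent if it is acyclic, has a unique output edge, and every
vertex is the source of exactly one edge and the target of at least one edge. -/
def Confluent : Prop := N.Acyclic ∧ (∃! e : N.E, N.tgt e = none) ∧
  (∀ v : N.V, ∃! e : N.E, N.src e = some v) ∧ (∀ v : N.V, ∃ e : N.E, N.tgt e = some v)

end Network

/-- An opetopic network: an acyclic network with a unique output edge, together with
thin edges (which are inputs) and thin vertices (each the target of exactly one edge,
which is not thin). -/
structure OpetopicNetwork extends Network where
  thinE : E → Prop
  thinV : V → Prop
  acyclic : toNetwork.Acyclic
  out_unique : ∃! e : E, tgt e = none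
  thinE_input : ∀ e, thinE e → src e = none
  thinV_unique : ∀ v, thinV v → ∃! e, tgt e = some v
  thinV_nonthin : ∀ v e, thinV v → tgt e = some v → ¬ thinE e

/-- An opetopic network is reduced if every thin edge has a target vertex which is
the target of no other edge. -/
def OpetopicNetwork.Reduced (N : OpetopicNetwork) : Prop :=
  ∀ e, N.thinE e → ∃ v, N.tgt e = some v ∧ ∀ e', N.tgt e' = some v → e' = e

/-- `c` is a constellation from `N` to `P`: a bijection from the vertices of `N` to
the input edges of `P`, preserving thinness, such that for every edge `e` of `P`
there is exactly one edge of `N` with a source but not a target in the preimage of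
`I_e` (the input edges of `P` from which there is a path to `e`). -/
def IsConstellation (N P : OpetopicNetwork) (c : N.V → P.E) : Prop :=
  (∀ v, P.src (c v) = none) ∧
  Function.Injective c ∧
  (∀ e : P.E, P.src e = none → ∃ v, c v = e) ∧
  (∀ v, N.thinV v ↔ P.thinE (c v)) ∧
  (∀ e : P.E, ∃! e' : N.E,
    (∃ v, N.src e' = some v ∧ P.toNetwork.PathTo (c v) e) ∧
    ¬ (∃ v, N.tgt e' = some v ∧ P.toNetwork.PathTo (c v) e))

/-- An `n`-dimensional opetopic sequence `N_0 → N_1 → … → N_n`. -/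
structure OpetopicSequence (n : ℕ) where
  N : Fin (n + 1) → OpetopicNetwork
  c : ∀ q : Fin n, (N q.castSucc).V → (N q.succ).E
  constell : ∀ q : Fin n, IsConstellation (N q.castSucc) (N q.succ) (c q)
  linear0 : (N 0).toNetwork.Linear
  noThin0 : ∀ e, ¬ (N 0).thinE e
  top_single : ∃! _e : (N (Fin.last n)).E, True
  top_noV : IsEmpty (N (Fin.last n)).V

/-- An isomorphism of opetopic sequences: families of bijections on edges and
vertices preserving sources, targets, thin edges and thin vertices, and commuting
with the constellations. -/
def SeqIso (n : ℕ) (S S' : OpetopicSequence n) : Prop :=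
  ∃ (fE : ∀ q : Fin (n + 1), (S.N q).E ≃ (S'.N q).E)
    (fV : ∀ q : Fin (n + 1), (S.N q).V ≃ (S'.N q).V),
    (∀ q : Fin (n + 1),
      (∀ e v, (S.N q).src e = some v ↔ (S'.N q).src (fE q e) = some (fV q v)) ∧
      (∀ e v, (S.N q).tgt e = some v ↔ (S'.N q).tgt (fE q e) = some (fV q v)) ∧
      (∀ e, (S.N q).thinE e ↔ (S'.N q).thinE (fE q e)) ∧
      (∀ v, (S.N q).thinV v ↔ (S'.N q).thinV (fV q v))) ∧
    (∀ q : Fin n, ∀ v, fE q.succ (S.c q v) = S'.c q (fV q.castSucc v))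

/-- The opetopic sequence `S` realizes the sequence
`G_0^-(⟨K⟩) → … → G_n^-(⟨K⟩)` associated to the opetopic directed complex `K`
(with top basis element `g` and thin elements `thin`): the edges of `S.N q`
correspond bijectively to the terms of `g_q^-(⟨K⟩)`, the vertices to the terms of
`⟨K⟩_{q+1}^-`, sources, targets and thinness are as prescribed by `∂⁺`, `∂⁻` and
`thin`, and the constellations are the identity correspondences. -/
def RealizedBy (K : FADC) (thin : K.B → Prop) (n : ℕ) (g : K.B)
    (S : OpetopicSequence n) : Prop :=
  ∃ (eE : ∀ q : Fin (n + 1), (S.N q).E → K.B)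
    (eV : ∀ q : Fin (n + 1), (S.N q).V → K.B),
    (∀ q : Fin (n + 1),
      Function.Injective (eE q) ∧
      (∀ ed, eE q ed ∈ (K.gch (K.atomNeg g n q.1) (K.atomNeg g n (q.1 + 1))).support) ∧
      (∀ b ∈ (K.gch (K.atomNeg g n q.1) (K.atomNeg g n (q.1 + 1))).support,
        ∃ ed, eE q ed = b) ∧
      Function.Injective (eV q) ∧
      (∀ v, eV q v ∈ (K.atomNeg g n (q.1 + 1)).support) ∧
      (∀ b ∈ (K.atomNeg g n (q.1 + 1)).support, ∃ v, eV q v = b) ∧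
      (∀ ed v, (S.N q).src ed = some v ↔
        eE q ed ∈ (K.bdp (Finsupp.single (eV q v) 1)).support) ∧
      (∀ ed v, (S.N q).tgt ed = some v ↔
        eE q ed ∈ (K.bdm (Finsupp.single (eV q v) 1)).support) ∧
      (∀ ed, (S.N q).thinE ed ↔ thin (eE q ed)) ∧
      (∀ v, (S.N q).thinV v ↔ thin (eV q v))) ∧
    (∀ q : Fin n, ∀ v, eE q.succ (S.c q v) = eV q.castSucc v)

/-- A bundled `n`-dimensional opetopic directed complex. -/
structure ODCBundle (n : ℕ) where
  K : FADC
  thin : K.B → Prop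
  g : K.B
  dim_g : K.dim g = n
  isODC : IsODC K thin n

/-- Isomorphism of (bundled) opetopic directed complexes: a dimension- and
thinness-preserving bijection of bases commuting with boundaries and augmentations. -/
def ODCIso {n : ℕ} (A A' : ODCBundle n) : Prop :=
  ∃ φ : A.K.B ≃ A'.K.B,
    (∀ b, A'.K.dim (φ b) = A.K.dim b) ∧
    (∀ b, A'.thin (φ b) ↔ A.thin b) ∧
    (∀ b, A'.K.bd (φ b) = Finsupp.equivMapDomain φ (A.K.bd b)) ∧
    (∀ b, A'.K.eps (φ b) = A.K.eps b)

/-! ### Auxiliary development -/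

open Relation

section FADCGeneric

namespace FADC

variable (K : FADC)

/-- `bdc` as an additive homomorphism. -/
noncomputable def bdcHom : (K.B →₀ ℤ) →+ (K.B →₀ ℤ) :=
  Finsupp.liftAddHom (fun b => zmultiplesHom _ (K.bd b))

lemma bdc_eq_hom (c : K.B →₀ ℤ) : K.bdc c = K.bdcHom c := rfl

lemma bdc_add (x y : K.B →₀ ℤ) : K.bdc (x + y) = K.bdc x + K.bdc y := by
  simp [bdc_eq_hom]

lemma bdc_zero : K.bdc 0 = 0 := by simp [bdc_eq_hom]

lemma bdc_neg (x : K.B →₀ ℤ) : K.bdc (-x) = -K.bdc x := by simp [bdc_eq_hom]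

lemma bdc_sub (x y : K.B →₀ ℤ) : K.bdc (x - y) = K.bdc x - K.bdc y := by
  simp [bdc_eq_hom]

lemma bdc_smul (m : ℤ) (x : K.B →₀ ℤ) : K.bdc (m • x) = m • K.bdc x := by
  simp [bdc_eq_hom]

lemma bdc_single (b : K.B) : K.bdc (Finsupp.single b 1) = K.bd b := by
  simp [bdc, Finsupp.sum_single_index]

lemma bdc_single_smul (b : K.B) (m : ℤ) : K.bdc (Finsupp.single b m) = m • K.bd b := by
  simp [bdc, Finsupp.sum_single_index]

lemma bdc_finsetSum {ι : Type*} (s : Finset ι) (f : ι → (K.B →₀ ℤ)) :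
    K.bdc (∑ i ∈ s, f i) = ∑ i ∈ s, K.bdc (f i) := by
  simp [bdc_eq_hom, map_sum]

lemma bdc_bd (b : K.B) : K.bdc (K.bd b) = 0 := K.bd_bd b

lemma bdc_bdc (x : K.B →₀ ℤ) : K.bdc (K.bdc x) = 0 := by
  induction x using Finsupp.induction with
  | zero => simp [bdc_zero]
  | single_add b m f _ _ ih =>
      rw [bdc_add, bdc_add, ih, bdc_single_smul, bdc_smul, bdc_bd]
      simp

lemma epsc_single (b : K.B) (m : ℤ) : K.epsc (Finsupp.single b m) = m * K.eps b := by
  simp [epsc, Finsupp.sum_single_index]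

/-- `epsc` as an additive homomorphism. -/
noncomputable def epscHom : (K.B →₀ ℤ) →+ ℤ :=
  Finsupp.liftAddHom (fun b => zmultiplesHom _ (K.eps b))

lemma epsc_eq_hom (c : K.B →₀ ℤ) : K.epsc c = K.epscHom c := by
  simp [epsc, epscHom, Finsupp.liftAddHom_apply, Finsupp.sum, smul_eq_mul]

lemma epsc_finsetSum {ι : Type*} (s : Finset ι) (f : ι → (K.B →₀ ℤ)) :
    K.epsc (∑ i ∈ s, f i) = ∑ i ∈ s, K.epsc (f i) := by
  simp [epsc_eq_hom, map_sum]

lemma bdp_apply (c : K.B →₀ ℤ) (b : K.B) : K.bdp c b = max (K.bdc c b) 0 := by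
  simp [bdp, Finsupp.mapRange_apply]

lemma bdm_apply (c : K.B →₀ ℤ) (b : K.B) : K.bdm c b = max (-(K.bdc c b)) 0 := by
  simp [bdm, Finsupp.mapRange_apply]

lemma bdp_sub_bdm (c : K.B →₀ ℤ) : K.bdp c - K.bdm c = K.bdc c := by
  ext b
  simp only [Finsupp.sub_apply, bdp_apply, bdm_apply]
  omega

lemma bdc_bdp_eq_bdc_bdm (c : K.B →₀ ℤ) : K.bdc (K.bdp c) = K.bdc (K.bdm c) := by
  have h := K.bdc_sub (K.bdp c) (K.bdm c)
  rw [K.bdp_sub_bdm, K.bdc_bdc] at h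
  linear_combination (norm := abel) -h

lemma bdp_bdp (c : K.B →₀ ℤ) : K.bdp (K.bdp c) = K.bdp (K.bdm c) :=
  congrArg (fun y : K.B →₀ ℤ => y.mapRange (fun m => max m 0) (by simp))
    (K.bdc_bdp_eq_bdc_bdm c)

lemma bdm_bdp (c : K.B →₀ ℤ) : K.bdm (K.bdp c) = K.bdm (K.bdm c) :=
  congrArg (fun y : K.B →₀ ℤ => (-y).mapRange (fun m => max m 0) (by simp))
    (K.bdc_bdp_eq_bdc_bdm c)

lemma bdp_iter_succ (r : ℕ) (c : K.B →₀ ℤ) : K.bdp^[r+1] c = K.bdp (K.bdp^[r] c) :=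
  Function.iterate_succ_apply' _ _ _

lemma bdm_iter (r : ℕ) (c : K.B →₀ ℤ) : K.bdm^[r+1] c = K.bdm (K.bdp^[r] c) := by
  induction r with
  | zero => rfl
  | succ r ih =>
      rw [Function.iterate_succ_apply', ih, ← K.bdm_bdp, K.bdp_iter_succ]

lemma bdp_zero : K.bdp 0 = 0 := by
  unfold bdp; rw [K.bdc_zero]; simp

lemma bdm_zero : K.bdm 0 = 0 := by
  unfold bdm; rw [K.bdc_zero]; simp

end FADC

end FADCGeneric

section NetGeneric

variable {N : OpetopicNetwork}

lemma no_selfloop {e : N.E} {v : N.V} (ht : N.tgt e = some v) (hs : N.src e = some v) :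
    False :=
  N.acyclic e (Relation.TransGen.single ⟨v, ht, hs⟩)

lemma path_to_input {i x : N.E} (hi : N.src i = none) (h : N.toNetwork.PathTo x i) :
    x = i := by
  rcases Relation.ReflTransGen.cases_tail h with h | ⟨c, _, hc⟩
  · exact h.symm
  · rcases hc with ⟨v, _, hsv⟩
    rw [hi] at hsv
    cases hsv

lemma wf_fwd (N : OpetopicNetwork) : WellFounded (fun a b : N.E => Relation.TransGen N.toNetwork.step b a) := by
  haveI := N.finE
  haveI : IsTrans N.E (fun a b : N.E => Relation.TransGen N.toNetwork.step b a) :=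
    ⟨fun _ _ _ h1 h2 => h2.trans h1⟩
  haveI : IsIrrefl N.E (fun a b : N.E => Relation.TransGen N.toNetwork.step b a) :=
    ⟨fun a h => N.acyclic a h⟩
  exact Finite.wellFounded_of_trans_of_irrefl _

lemma wf_bwd (N : OpetopicNetwork) : WellFounded (fun a b : N.E => Relation.TransGen N.toNetwork.step a b) := by
  haveI := N.finE
  haveI : IsTrans N.E (fun a b : N.E => Relation.TransGen N.toNetwork.step a b) :=
    ⟨fun _ _ _ h1 h2 => h1.trans h2⟩
  haveI : IsIrrefl N.E (fun a b : N.E => Relation.TransGen N.toNetwork.step a b) :=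
    ⟨fun a h => N.acyclic a h⟩
  exact Finite.wellFounded_of_trans_of_irrefl _

/-- The unique output edge of an opetopic network. -/
noncomputable def oEdge (N : OpetopicNetwork) : N.E := N.out_unique.choose

lemma oEdge_tgt (N : OpetopicNetwork) : N.tgt (oEdge N) = none := N.out_unique.choose_spec.1

lemma oEdge_unique (N : OpetopicNetwork) : ∀ e, N.tgt e = none → e = oEdge N :=
  N.out_unique.choose_spec.2

lemma step_unique (OU : ∀ v : N.V, ∃! f, N.src f = some v) {e f f' : N.E}
    (h1 : N.toNetwork.step e f) (h2 : N.toNetwork.step e f') : f = f' := by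
  obtain ⟨v, htv, hsv⟩ := h1
  obtain ⟨v', htv', hsv'⟩ := h2
  rw [htv] at htv'
  obtain rfl : v = v' := by injection htv'
  exact ((OU v).unique hsv hsv').symm ▸ rfl

lemma path_compare (OU : ∀ v : N.V, ∃! f, N.src f = some v) {a b c : N.E}
    (h1 : N.toNetwork.PathTo a b) (h2 : N.toNetwork.PathTo a c) :
    N.toNetwork.PathTo b c ∨ N.toNetwork.PathTo c b := by
  induction h1 using Relation.ReflTransGen.head_induction_on with
  | refl => exact Or.inl h2
  | head hstep _ ih =>
      rcases Relation.ReflTransGen.cases_head h2 with rfl | ⟨z, hz, hzc⟩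
      · exact Or.inr (Relation.ReflTransGen.head hstep (by assumption))
      · exact ih (by rwa [step_unique OU hz hstep] at hzc)

lemma tgt_unique_on_path (OU : ∀ v : N.V, ∃! f, N.src f = some v) {i f f' : N.E} {u : N.V}
    (ht : N.tgt f = some u) (ht' : N.tgt f' = some u)
    (hp : N.toNetwork.PathTo i f) (hp' : N.toNetwork.PathTo i f') : f = f' := by
  have key : ∀ x y : N.E, N.tgt x = some u → N.tgt y = some u →
      N.toNetwork.PathTo x y → x = y := by
    intro x y hx hy hxy
    rcases Relation.ReflTransGen.cases_head hxy with rfl | ⟨z, hz, hzy⟩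
    · rfl
    · exfalso
      obtain ⟨w, hxw, hzw⟩ := hz
      rw [hx] at hxw
      obtain rfl : u = w := by injection hxw
      exact N.acyclic z (Relation.TransGen.tail' hzy ⟨u, hy, hzw⟩)
  rcases path_compare OU hp hp' with h | h
  · exact key _ _ ht ht' h
  · exact (key _ _ ht' ht h).symm

lemma reach_output (hOE : ∀ v : N.V, ∃ e, N.src e = some v) {o : N.E}
    (ho : N.tgt o = none) (hu : ∀ e, N.tgt e = none → e = o) :
    ∀ e, N.toNetwork.PathTo e o := by
  intro e
  induction e using (wf_fwd N).induction with
  | _ e ih =>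
      cases h : N.tgt e with
      | none => rw [hu e h]; exact Relation.ReflTransGen.refl
      | some v =>
          obtain ⟨z, hz⟩ := hOE v
          exact Relation.ReflTransGen.head ⟨v, h, hz⟩
            (ih z (Relation.TransGen.single ⟨v, h, hz⟩))

lemma last_step {x z : N.E} {u : N.V} (h : N.toNetwork.PathTo x z)
    (hz : N.src z = some u) (hne : x ≠ z) :
    ∃ f, N.tgt f = some u ∧ N.toNetwork.PathTo x f := by
  rcases Relation.ReflTransGen.cases_tail h with h | ⟨c, pc, sc⟩
  · exact absurd h.symm hne
  · obtain ⟨w, htc, hsz⟩ := sc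
    rw [hz] at hsz
    obtain rfl : u = w := by injection hsz
    exact ⟨c, htc, pc⟩

lemma path_to_out_iff (OU : ∀ v : N.V, ∃! f, N.src f = some v) {i z : N.E} {u : N.V}
    (hi : N.src i = none) (hz : N.src z = some u) :
    N.toNetwork.PathTo i z ↔ ∃ f, N.tgt f = some u ∧ N.toNetwork.PathTo i f := by
  constructor
  · intro h
    refine last_step h hz ?_
    rintro rfl
    rw [hi] at hz
    cases hz
  · rintro ⟨f, hf, hp⟩
    exact Relation.ReflTransGen.tail hp ⟨u, hf, hz⟩

end NetGeneric

section Constell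

open scoped Classical in
/-- `1` if the proposition holds, `0` otherwise. -/
noncomputable def b01 (p : Prop) : ℤ := if p then 1 else 0

lemma b01_pos {p : Prop} (h : p) : b01 p = 1 := if_pos h

lemma b01_neg {p : Prop} (h : ¬p) : b01 p = 0 := if_neg h

lemma b01_congr {p q : Prop} (h : p ↔ q) : b01 p = b01 q := by
  by_cases hp : p
  · rw [b01_pos hp, b01_pos (h.1 hp)]
  · rw [b01_neg hp, b01_neg (fun hq => hp (h.2 hq))]

lemma b01_mul (p q : Prop) : b01 p * b01 q = b01 (p ∧ q) := by
  by_cases hp : p <;> by_cases hq : q <;>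
    simp [b01_pos, b01_neg, hp, hq, b01]

lemma sum_b01_eq {α : Type*} [Fintype α] (a : α) :
    (∑ x : α, b01 (x = a)) = 1 := by
  rw [Finset.sum_eq_single_of_mem a (Finset.mem_univ a)
    (fun b _ hb => b01_neg hb), b01_pos rfl]

variable {Nl Nu : OpetopicNetwork}

/-- The coefficient of the boundary pairing determined by a constellation. -/
noncomputable def kA (cc : Nl.V → Nu.E) (e : Nu.E) (f : Nl.E) : ℤ :=
  b01 (∃ v, Nl.src f = Option.some v ∧ Nu.toNetwork.PathTo (cc v) e) -
  b01 (∃ v, Nl.tgt f = Option.some v ∧ Nu.toNetwork.PathTo (cc v) e)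

variable {cc : Nl.V → Nu.E}

lemma W_cc (hc : IsConstellation Nl Nu cc) {v v' : Nl.V} :
    Nu.toNetwork.PathTo (cc v') (cc v) ↔ v' = v := by
  constructor
  · intro h
    exact hc.2.1 (path_to_input (hc.1 v) h)
  · rintro rfl
    exact Relation.ReflTransGen.refl

lemma OU_con (hc : IsConstellation Nl Nu cc) : ∀ v : Nl.V, ∃! f, Nl.src f = Option.some v := by
  intro v
  obtain ⟨f, ⟨⟨w, hsw, hpw⟩, hnt⟩, huniq⟩ := hc.2.2.2.2 (cc v)
  have hwv : w = v := (W_cc hc).1 hpw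
  rw [hwv] at hsw
  refine ⟨f, hsw, ?_⟩
  intro f' hsf'
  refine huniq f' ⟨⟨v, hsf', Relation.ReflTransGen.refl⟩, ?_⟩
  rintro ⟨w', htw', hpw'⟩
  have hw'v : w' = v := (W_cc hc).1 hpw'
  rw [hw'v] at htw'
  exact no_selfloop htw' hsf'

/-- The unique outgoing edge at a vertex (of the lower network of a constellation). -/
noncomputable def outC (hc : IsConstellation Nl Nu cc) (v : Nl.V) : Nl.E :=
  (OU_con hc v).choose

lemma src_outC (hc : IsConstellation Nl Nu cc) (v : Nl.V) :
    Nl.src (outC hc v) = Option.some v := (OU_con hc v).choose_spec.1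

lemma outC_eq (hc : IsConstellation Nl Nu cc) {v : Nl.V} {f : Nl.E}
    (h : Nl.src f = Option.some v) : f = outC hc v := (OU_con hc v).choose_spec.2 f h

/-- The unique "exit edge" associated to an upper edge by a constellation. -/
noncomputable def dE (hc : IsConstellation Nl Nu cc) (e : Nu.E) : Nl.E :=
  (hc.2.2.2.2 e).choose

lemma dE_spec (hc : IsConstellation Nl Nu cc) (e : Nu.E) :
    (∃ v, Nl.src (dE hc e) = Option.some v ∧ Nu.toNetwork.PathTo (cc v) e) ∧
      ¬(∃ v, Nl.tgt (dE hc e) = Option.some v ∧ Nu.toNetwork.PathTo (cc v) e) :=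
  (hc.2.2.2.2 e).choose_spec.1

lemma dE_unique (hc : IsConstellation Nl Nu cc) (e : Nu.E) {f : Nl.E}
    (h : (∃ v, Nl.src f = Option.some v ∧ Nu.toNetwork.PathTo (cc v) e) ∧
      ¬(∃ v, Nl.tgt f = Option.some v ∧ Nu.toNetwork.PathTo (cc v) e)) : f = dE hc e :=
  (hc.2.2.2.2 e).choose_spec.2 f h

lemma kA_pos (hc : IsConstellation Nl Nu cc) (e : Nu.E) (f : Nl.E) :
    max (kA cc e f) 0 = b01 (f = dE hc e) := by
  unfold kA
  by_cases hs : ∃ v, Nl.src f = Option.some v ∧ Nu.toNetwork.PathTo (cc v) e <;>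
    by_cases ht : ∃ v, Nl.tgt f = Option.some v ∧ Nu.toNetwork.PathTo (cc v) e
  · rw [b01_pos hs, b01_pos ht, b01_neg]
    · norm_num
    · rintro rfl
      exact (dE_spec hc e).2 ht
  · rw [b01_pos hs, b01_neg ht, b01_pos (dE_unique hc e ⟨hs, ht⟩)]
    norm_num
  · rw [b01_neg hs, b01_pos ht, b01_neg]
    · norm_num
    · rintro rfl
      exact hs (dE_spec hc e).1
  · rw [b01_neg hs, b01_neg ht, b01_neg]
    · norm_num
    · rintro rfl
      exact hs (dE_spec hc e).1

lemma kA_neg (e : Nu.E) (f : Nl.E) :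
    max (-(kA cc e f)) 0 =
      b01 ((∃ v, Nl.tgt f = Option.some v ∧ Nu.toNetwork.PathTo (cc v) e) ∧
          ¬(∃ v, Nl.src f = Option.some v ∧ Nu.toNetwork.PathTo (cc v) e)) := by
  unfold kA
  by_cases hs : ∃ v, Nl.src f = Option.some v ∧ Nu.toNetwork.PathTo (cc v) e <;>
    by_cases ht : ∃ v, Nl.tgt f = Option.some v ∧ Nu.toNetwork.PathTo (cc v) e
  · rw [b01_pos hs, b01_pos ht, b01_neg (fun hh => hh.2 hs)]
    norm_num
  · rw [b01_pos hs, b01_neg ht, b01_neg (fun hh => hh.2 hs)]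
    norm_num
  · rw [b01_neg hs, b01_pos ht, b01_pos ⟨ht, hs⟩]
    norm_num
  · rw [b01_neg hs, b01_neg ht, b01_neg (fun hh => ht hh.1)]
    norm_num

lemma sum_maxkA [Fintype Nl.E] (hc : IsConstellation Nl Nu cc) (e : Nu.E) :
    (∑ f : Nl.E, max (kA cc e f) 0) = 1 := by
  rw [Finset.sum_congr rfl fun f _ => kA_pos hc e f, sum_b01_eq]

lemma boole_exists_src [Fintype Nl.V] (f : Nl.E) (φ : Nl.V → Prop) :
    b01 (∃ v, Nl.src f = Option.some v ∧ φ v)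
      = ∑ v : Nl.V, b01 (Nl.src f = Option.some v ∧ φ v) := by
  cases h : Nl.src f with
  | none =>
      rw [b01_neg, Finset.sum_eq_zero]
      · intro v _
        refine b01_neg ?_
        rintro ⟨hv, _⟩
        cases hv
      · rintro ⟨v, hv, _⟩
        cases hv
  | some v₀ =>
      by_cases hφ : φ v₀
      · rw [b01_pos ⟨v₀, rfl, hφ⟩, Finset.sum_eq_single_of_mem v₀ (Finset.mem_univ v₀),
          b01_pos ⟨rfl, hφ⟩]
        intro v _ hv
        refine b01_neg ?_
        rintro ⟨hsv, _⟩
        have : v₀ = v := by injection hsv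
        exact hv this.symm
      · rw [b01_neg, Finset.sum_eq_zero]
        · intro v _
          refine b01_neg ?_
          rintro ⟨hsv, hφv⟩
          have : v₀ = v := by injection hsv
          rw [← this] at hφv
          exact hφ hφv
        · rintro ⟨v, hsv, hφv⟩
          have : v₀ = v := by injection hsv
          rw [← this] at hφv
          exact hφ hφv

lemma boole_exists_tgt [Fintype Nl.V] (f : Nl.E) (φ : Nl.V → Prop) :
    b01 (∃ v, Nl.tgt f = Option.some v ∧ φ v)
      = ∑ v : Nl.V, b01 (Nl.tgt f = Option.some v ∧ φ v) := by
  cases h : Nl.tgt f with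
  | none =>
      rw [b01_neg, Finset.sum_eq_zero]
      · intro v _
        refine b01_neg ?_
        rintro ⟨hv, _⟩
        cases hv
      · rintro ⟨v, hv, _⟩
        cases hv
  | some v₀ =>
      by_cases hφ : φ v₀
      · rw [b01_pos ⟨v₀, rfl, hφ⟩, Finset.sum_eq_single_of_mem v₀ (Finset.mem_univ v₀),
          b01_pos ⟨rfl, hφ⟩]
        intro v _ hv
        refine b01_neg ?_
        rintro ⟨hsv, _⟩
        have : v₀ = v := by injection hsv
        exact hv this.symm
      · rw [b01_neg, Finset.sum_eq_zero]
        · intro v _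
          refine b01_neg ?_
          rintro ⟨hsv, hφv⟩
          have : v₀ = v := by injection hsv
          rw [← this] at hφv
          exact hφ hφv
        · rintro ⟨v, hsv, hφv⟩
          have : v₀ = v := by injection hsv
          rw [← this] at hφv
          exact hφ hφv

lemma sum_src_boole [Fintype Nl.E] (hc : IsConstellation Nl Nu cc) (v : Nl.V)
    (Q : Nl.E → Prop) :
    (∑ f : Nl.E, b01 (Nl.src f = Option.some v ∧ Q f)) = b01 (Q (outC hc v)) := by
  rw [Finset.sum_eq_single_of_mem (outC hc v) (Finset.mem_univ _)]
  · exact b01_congr (by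
      constructor
      · rintro ⟨_, h2⟩
        exact h2
      · intro h2
        exact ⟨src_outC hc v, h2⟩)
  · intro f _ hf
    refine b01_neg ?_
    rintro ⟨h1, _⟩
    exact hf (outC_eq hc h1)

lemma sum_tgt_boole [Fintype Nl.E] (hc : IsConstellation Nl Nu cc) {i : Nl.E}
    (hi : Nl.src i = none) (v : Nl.V) :
    (∑ f : Nl.E, b01 (Nl.tgt f = Option.some v ∧ Nl.toNetwork.PathTo i f))
      = b01 (Nl.toNetwork.PathTo i (outC hc v)) := by
  by_cases hex : ∃ f, Nl.tgt f = Option.some v ∧ Nl.toNetwork.PathTo i f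
  · obtain ⟨f₀, h1, h2⟩ := hex
    rw [Finset.sum_eq_single_of_mem f₀ (Finset.mem_univ _), b01_pos ⟨h1, h2⟩,
      b01_pos ((path_to_out_iff (OU_con hc) hi (src_outC hc v)).2 ⟨f₀, h1, h2⟩)]
    intro f _ hf
    refine b01_neg ?_
    rintro ⟨ha, hb⟩
    exact hf (tgt_unique_on_path (OU_con hc) ha h1 hb h2)
  · rw [Finset.sum_eq_zero fun f _ => b01_neg fun hf => hex ⟨f, hf⟩,
      b01_neg fun hp => hex ((path_to_out_iff (OU_con hc) hi (src_outC hc v)).1 hp)]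

lemma sum_src_single [Fintype Nl.E] (hc : IsConstellation Nl Nu cc) (v : Nl.V) :
    (∑ f : Nl.E, b01 (Nl.src f = Option.some v)) = 1 := by
  have h := sum_src_boole hc v (fun _ => True)
  rw [b01_pos trivial] at h
  rw [← h]
  exact Finset.sum_congr rfl fun f _ => b01_congr (by tauto)

lemma sum_tgt_single [Fintype Nl.E] (IN : ∀ v : Nl.V, ∃! f, Nl.tgt f = Option.some v)
    (v : Nl.V) :
    (∑ f : Nl.E, b01 (Nl.tgt f = Option.some v)) = 1 := by
  obtain ⟨f₀, hf₀, huf₀⟩ := IN v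
  rw [Finset.sum_eq_single_of_mem f₀ (Finset.mem_univ _), b01_pos hf₀]
  intro f _ hf
  exact b01_neg fun h => hf (huf₀ f h)

lemma ATERM [Fintype Nl.E] [Fintype Nl.V] (hc : IsConstellation Nl Nu cc) (e : Nu.E)
    {i : Nl.E} (hi : Nl.src i = none) :
    (∑ f : Nl.E, kA cc e f * b01 (Nl.toNetwork.PathTo i f)) = 0 := by
  have expand : ∀ f : Nl.E, kA cc e f * b01 (Nl.toNetwork.PathTo i f)
      = b01 (∃ v, Nl.src f = Option.some v ∧
            (Nu.toNetwork.PathTo (cc v) e ∧ Nl.toNetwork.PathTo i f))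
        - b01 (∃ v, Nl.tgt f = Option.some v ∧
            (Nu.toNetwork.PathTo (cc v) e ∧ Nl.toNetwork.PathTo i f)) := by
    intro f
    unfold kA
    rw [sub_mul, b01_mul, b01_mul]
    congr 1
    · exact b01_congr (by tauto)
    · exact b01_congr (by tauto)
  rw [Finset.sum_congr rfl fun f _ => expand f, Finset.sum_sub_distrib]
  have hsrc : (∑ f : Nl.E, b01 (∃ v, Nl.src f = Option.some v ∧
      (Nu.toNetwork.PathTo (cc v) e ∧ Nl.toNetwork.PathTo i f)))
      = ∑ v : Nl.V, b01 (Nu.toNetwork.PathTo (cc v) e) *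
          b01 (Nl.toNetwork.PathTo i (outC hc v)) := by
    rw [Finset.sum_congr rfl fun f _ => boole_exists_src f _, Finset.sum_comm]
    refine Finset.sum_congr rfl fun v _ => ?_
    by_cases hW : Nu.toNetwork.PathTo (cc v) e
    · rw [b01_pos hW, one_mul,
        ← sum_src_boole hc v (fun f => Nl.toNetwork.PathTo i f)]
      refine Finset.sum_congr rfl fun f _ => b01_congr (by tauto)
    · rw [b01_neg hW, zero_mul]
      exact Finset.sum_eq_zero fun f _ => b01_neg (by tauto)
  have htgt : (∑ f : Nl.E, b01 (∃ v, Nl.tgt f = Option.some v ∧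
      (Nu.toNetwork.PathTo (cc v) e ∧ Nl.toNetwork.PathTo i f)))
      = ∑ v : Nl.V, b01 (Nu.toNetwork.PathTo (cc v) e) *
          b01 (Nl.toNetwork.PathTo i (outC hc v)) := by
    rw [Finset.sum_congr rfl fun f _ => boole_exists_tgt f _, Finset.sum_comm]
    refine Finset.sum_congr rfl fun v _ => ?_
    by_cases hW : Nu.toNetwork.PathTo (cc v) e
    · rw [b01_pos hW, one_mul, ← sum_tgt_boole hc hi v]
      refine Finset.sum_congr rfl fun f _ => b01_congr (by tauto)
    · rw [b01_neg hW, zero_mul]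
      exact Finset.sum_eq_zero fun f _ => b01_neg (by tauto)
  rw [hsrc, htgt, sub_self]

lemma sum_kA_zero [Fintype Nl.E] [Fintype Nl.V] (hc : IsConstellation Nl Nu cc)
    (IN : ∀ v : Nl.V, ∃! f, Nl.tgt f = Option.some v) (e : Nu.E) :
    (∑ f : Nl.E, kA cc e f) = 0 := by
  unfold kA
  rw [Finset.sum_sub_distrib]
  have hsrc : (∑ f : Nl.E, b01 (∃ v, Nl.src f = Option.some v ∧
      Nu.toNetwork.PathTo (cc v) e))
      = ∑ v : Nl.V, b01 (Nu.toNetwork.PathTo (cc v) e) := by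
    rw [Finset.sum_congr rfl fun f _ => boole_exists_src f _, Finset.sum_comm]
    refine Finset.sum_congr rfl fun v _ => ?_
    by_cases hW : Nu.toNetwork.PathTo (cc v) e
    · rw [b01_pos hW, ← sum_src_single hc v]
      refine Finset.sum_congr rfl fun f _ => b01_congr (by tauto)
    · rw [b01_neg hW]
      exact Finset.sum_eq_zero fun f _ => b01_neg (by tauto)
  have htgt : (∑ f : Nl.E, b01 (∃ v, Nl.tgt f = Option.some v ∧
      Nu.toNetwork.PathTo (cc v) e))
      = ∑ v : Nl.V, b01 (Nu.toNetwork.PathTo (cc v) e) := by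
    rw [Finset.sum_congr rfl fun f _ => boole_exists_tgt f _, Finset.sum_comm]
    refine Finset.sum_congr rfl fun v _ => ?_
    by_cases hW : Nu.toNetwork.PathTo (cc v) e
    · rw [b01_pos hW, ← sum_tgt_single IN v]
      refine Finset.sum_congr rfl fun f _ => b01_congr (by tauto)
    · rw [b01_neg hW]
      exact Finset.sum_eq_zero fun f _ => b01_neg (by tauto)
  rw [hsrc, htgt, sub_self]

lemma lin_in_unique (N : OpetopicNetwork) (h : N.toNetwork.Linear) :
    ∀ v : N.V, ∃! f, N.tgt f = Option.some v := by
  obtain ⟨_, k, e, vq, _, hlast, hstep⟩ := h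
  intro v
  refine ⟨e (vq.symm v).castSucc, ?_, ?_⟩
  · show N.tgt (e (vq.symm v).castSucc) = Option.some v
    rw [(hstep (vq.symm v)).1, vq.apply_symm_apply]
  · intro f' hf'
    obtain ⟨j, rfl⟩ : ∃ j, e j = f' := ⟨e.symm f', e.apply_symm_apply f'⟩
    induction j using Fin.lastCases with
    | last =>
        rw [hlast] at hf'
        cases hf'
    | cast i =>
        rw [(hstep i).1] at hf'
        have hv : vq i = v := by injection hf'
        rw [← hv, vq.symm_apply_apply]

lemma VNl_nonempty (hc : IsConstellation Nl Nu cc) : Nonempty Nl.V := by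
  obtain ⟨e', ⟨⟨v, _, _⟩, _⟩, _⟩ := hc.2.2.2.2 (oEdge Nu)
  exact ⟨v⟩

lemma out_src_ne (hc : IsConstellation Nl Nu cc) : Nl.src (oEdge Nl) ≠ none := by
  intro h
  obtain ⟨v⟩ := VNl_nonempty hc
  have hreach := reach_output (fun u => ⟨outC hc u, src_outC hc u⟩)
    (oEdge_tgt Nl) (oEdge_unique Nl) (outC hc v)
  have heq := path_to_input h hreach
  have h2 := src_outC hc v
  rw [heq, h] at h2
  cases h2

lemma W_output (hc : IsConstellation Nl Nu cc)
    (OUPex : ∀ u : Nu.V, ∃ z, Nu.src z = Option.some u) (v : Nl.V) :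
    Nu.toNetwork.PathTo (cc v) (oEdge Nu) :=
  reach_output OUPex (oEdge_tgt Nu) (oEdge_unique Nu) (cc v)

lemma dE_output (hc : IsConstellation Nl Nu cc)
    (OUPex : ∀ u : Nu.V, ∃ z, Nu.src z = Option.some u) :
    dE hc (oEdge Nu) = oEdge Nl := by
  symm
  apply dE_unique hc
  constructor
  · cases h : Nl.src (oEdge Nl) with
    | none => exact absurd h (out_src_ne hc)
    | some v => exact ⟨v, rfl, W_output hc OUPex v⟩
  · rintro ⟨v, htv, _⟩
    rw [oEdge_tgt Nl] at htv
    cases htv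

lemma vertex_has_in (hc : IsConstellation Nl Nu cc)
    (OUPex : ∀ u : Nu.V, ∃ z, Nu.src z = Option.some u) (u : Nu.V) :
    ∃ f, Nu.tgt f = Option.some u := by
  obtain ⟨z, hz⟩ := OUPex u
  obtain ⟨e', ⟨⟨v, _, hpath⟩, _⟩, _⟩ := hc.2.2.2.2 z
  have hne : cc v ≠ z := by
    intro h
    rw [← h, hc.1 v] at hz
    cases hz
  obtain ⟨f, hf, _⟩ := last_step hpath hz hne
  exact ⟨f, hf⟩

lemma dcc_eq_out (hc : IsConstellation Nl Nu cc) (v : Nl.V) :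
    dE hc (cc v) = outC hc v := by
  symm
  apply dE_unique hc
  constructor
  · exact ⟨v, src_outC hc v, Relation.ReflTransGen.refl⟩
  · rintro ⟨w, htw, hpw⟩
    have hwv : w = v := (W_cc hc).1 hpw
    rw [hwv] at htw
    exact no_selfloop htw (src_outC hc v)

lemma stay_in_W (hc : IsConstellation Nl Nu cc) (e : Nu.E) :
    ∀ x : Nl.E, (∃ w, Nl.src x = Option.some w ∧ Nu.toNetwork.PathTo (cc w) e) →
      Relation.ReflTransGen Nl.toNetwork.step x (dE hc e) := by
  intro x
  induction x using (wf_fwd Nl).induction with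
  | _ x ih =>
      rintro ⟨w, hsw, hWw⟩
      by_cases hT : ∃ w', Nl.tgt x = Option.some w' ∧ Nu.toNetwork.PathTo (cc w') e
      · obtain ⟨w', htw', hWw'⟩ := hT
        have hstep : Nl.toNetwork.step x (outC hc w') := ⟨w', htw', src_outC hc w'⟩
        exact Relation.ReflTransGen.head hstep
          (ih _ (Relation.TransGen.single hstep) ⟨w', src_outC hc w', hWw'⟩)
      · rw [dE_unique hc e ⟨⟨w, hsw, hWw⟩, hT⟩]

lemma inedge_to_dE (hc : IsConstellation Nl Nu cc) (e : Nu.E) {f : Nl.E} {u : Nl.V}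
    (htf : Nl.tgt f = Option.some u) (hWu : Nu.toNetwork.PathTo (cc u) e) :
    Relation.TransGen Nl.toNetwork.step f (dE hc e) :=
  Relation.TransGen.head' ⟨u, htf, src_outC hc u⟩
    (stay_in_W hc e _ ⟨u, src_outC hc u, hWu⟩)

lemma sum_inputs_smul (hc : IsConstellation Nl Nu cc) [Fintype Nl.V] [Fintype Nu.E]
    {M : Type*} [AddCommGroup M] (F : Nu.E → M) :
    (∑ f : Nu.E, b01 (Nu.src f = none) • F f) = ∑ v : Nl.V, F (cc v) := by
  classical
  have step1 : (∑ f : Nu.E, b01 (Nu.src f = none) • F f)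
      = ∑ f ∈ Finset.univ.filter (fun f : Nu.E => Nu.src f = none), F f := by
    rw [Finset.sum_filter]
    refine Finset.sum_congr rfl fun f _ => ?_
    by_cases h : Nu.src f = none
    · rw [b01_pos h, if_pos h, one_zsmul]
    · rw [b01_neg h, if_neg h, zero_zsmul]
  rw [step1]
  refine (Finset.sum_bij (fun (v : Nl.V) (_ : v ∈ Finset.univ) => cc v) ?_ ?_ ?_ ?_).symm
  · intro v _
    exact Finset.mem_filter.2 ⟨Finset.mem_univ _, hc.1 v⟩
  · intro v _ v' _ h
    exact hc.2.1 h
  · intro f hf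
    obtain ⟨v, hv⟩ := hc.2.2.1 f (Finset.mem_filter.1 hf).2
    exact ⟨v, Finset.mem_univ v, hv⟩
  · intro v _
    rfl

lemma red_core (hc : IsConstellation Nl Nu cc)
    (INex : ∀ u : Nl.V, ∃ f, Nl.tgt f = Option.some u) (e' : Nu.E) (e : Nl.E)
    (H : ∀ f : Nl.E, ((∃ u, Nl.tgt f = Option.some u ∧ Nu.toNetwork.PathTo (cc u) e') ∧
        ¬(∃ u, Nl.src f = Option.some u ∧ Nu.toNetwork.PathTo (cc u) e')) ↔ f = e) :
    ∃ v, Nl.tgt e = Option.some v ∧ ∀ h, Nl.tgt h = Option.some v → h = e := by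
  obtain ⟨⟨v, htv, hWv⟩, hnots⟩ := (H e).2 rfl
  have CL : ∀ h : Nl.E, ∀ u : Nl.V, Nl.tgt h = Option.some u →
      Nu.toNetwork.PathTo (cc u) e' →
      ∃ f, Nl.tgt f = Option.some u ∧ Nl.toNetwork.PathTo e f := by
    intro h
    induction h using (wf_bwd Nl).induction with
    | _ h ih =>
        intro u htu hWu
        by_cases hsrc : ∃ w, Nl.src h = Option.some w ∧ Nu.toNetwork.PathTo (cc w) e'
        · obtain ⟨w, hsw, hWw⟩ := hsrc
          obtain ⟨h₀, hth₀⟩ := INex w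
          have hstep : Nl.toNetwork.step h₀ h := ⟨w, hth₀, hsw⟩
          obtain ⟨f, htf, hpf⟩ := ih h₀ (Relation.TransGen.single hstep) w hth₀ hWw
          exact ⟨h, htu, Relation.ReflTransGen.tail hpf ⟨w, htf, hsw⟩⟩
        · have heq : h = e := (H h).1 ⟨⟨u, htu, hWu⟩, hsrc⟩
          exact ⟨e, heq ▸ htu, Relation.ReflTransGen.refl⟩
  refine ⟨v, htv, ?_⟩
  intro h hth
  by_contra hne
  cases hsh : Nl.src h with
  | none =>
      apply hne
      apply (H h).1
      refine ⟨⟨v, hth, hWv⟩, ?_⟩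
      rintro ⟨w, hw, _⟩
      rw [hsh] at hw
      cases hw
  | some w =>
      by_cases hWw : Nu.toNetwork.PathTo (cc w) e'
      · obtain ⟨h₁, hth₁⟩ := INex w
        obtain ⟨f, htf, hpf⟩ := CL h₁ w hth₁ hWw
        rcases Relation.ReflTransGen.cases_head hpf with heqf | ⟨y, hy, hyf⟩
        · rw [← heqf, htv] at htf
          have hvw : v = w := by injection htf
          rw [← hvw] at hsh
          exact no_selfloop hth hsh
        · obtain ⟨x, htex, hsy⟩ := hy
          rw [htv] at htex
          have hvx : v = x := by injection htex
          rw [← hvx] at hsy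
          have h1 : Relation.TransGen Nl.toNetwork.step y h :=
            Relation.TransGen.tail' hyf ⟨w, htf, hsh⟩
          exact Nl.acyclic y (Relation.TransGen.tail h1 ⟨v, hth, hsy⟩)
      · apply hne
        apply (H h).1
        refine ⟨⟨v, hth, hWv⟩, ?_⟩
        rintro ⟨w', hw', hWw'⟩
        rw [hsh] at hw'
        have hww' : w = w' := by injection hw'
        rw [← hww'] at hWw'
        exact hWw hWw'

end Constell

section FinLand

variable {n : ℕ} (S : OpetopicSequence n)

noncomputable instance (q : Fin (n+1)) : Fintype (S.N q).E :=
  @Fintype.ofFinite _ (S.N q).finE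

noncomputable instance (q : Fin (n+1)) : Fintype (S.N q).V :=
  @Fintype.ofFinite _ (S.N q).finV

/-- The graded basis of the directed complex built from an opetopic sequence. -/
abbrev Bas : Type := Σ q : Fin (n+1), (S.N q).E

instance : Finite (Bas S) := by
  unfold Bas
  infer_instance

/-- A chain supported in a single level. -/
noncomputable def chain (q : Fin (n+1)) (w : (S.N q).E → ℤ) : Bas S →₀ ℤ :=
  ∑ f : (S.N q).E, w f • Finsupp.single (⟨q, f⟩ : Bas S) 1

lemma chain_apply_same (q : Fin (n+1)) (w : (S.N q).E → ℤ) (f : (S.N q).E) :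
    chain S q w ⟨q, f⟩ = w f := by
  unfold chain
  rw [Finsupp.finset_sum_apply, Finset.sum_eq_single_of_mem f (Finset.mem_univ f)]
  · rw [Finsupp.smul_apply, Finsupp.single_eq_same, smul_eq_mul, mul_one]
  · intro f' _ hne
    rw [Finsupp.smul_apply, Finsupp.single_eq_of_ne', smul_zero]
    intro hh
    injection hh with h1 h2
    exact hne h2

lemma chain_apply_ne (q : Fin (n+1)) (w : (S.N q).E → ℤ) {q' : Fin (n+1)}
    (f' : (S.N q').E) (h : q' ≠ q) : chain S q w ⟨q', f'⟩ = 0 := by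
  unfold chain
  rw [Finsupp.finset_sum_apply, Finset.sum_eq_zero]
  intro f _
  rw [Finsupp.smul_apply, Finsupp.single_eq_of_ne', smul_zero]
  intro hh
  injection hh with h1 _
  exact h h1.symm

lemma chain_ext_zero (q : Fin (n+1)) (w : (S.N q).E → ℤ) (h : ∀ f, w f = 0) :
    chain S q w = 0 := by
  unfold chain
  exact Finset.sum_eq_zero fun f _ => by rw [h f, zero_smul]

lemma chain_congr (q : Fin (n+1)) (w w' : (S.N q).E → ℤ) (h : ∀ f, w f = w' f) :
    chain S q w = chain S q w' := by
  unfold chain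
  exact Finset.sum_congr rfl fun f _ => by rw [h f]

lemma chain_delta (q : Fin (n+1)) (f₀ : (S.N q).E) :
    chain S q (fun f => b01 (f = f₀)) = Finsupp.single (⟨q, f₀⟩ : Bas S) 1 := by
  ext b
  rcases b with ⟨q₂, f₂⟩
  by_cases hq : q₂ = q
  · subst hq
    rw [chain_apply_same]
    by_cases hf : f₂ = f₀
    · subst hf
      rw [b01_pos rfl, Finsupp.single_eq_same]
    · rw [b01_neg hf, Finsupp.single_eq_of_ne']
      intro hh
      injection hh with _ h2
      exact hf h2.symm
  · rw [chain_apply_ne _ _ _ _ hq, Finsupp.single_eq_of_ne']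
    intro hh
    injection hh with h1 _
    exact hq h1.symm

lemma neg_chain (q : Fin (n+1)) (w : (S.N q).E → ℤ) :
    -(chain S q w) = chain S q (fun f => -(w f)) := by
  unfold chain
  rw [← Finset.sum_neg_distrib]
  exact Finset.sum_congr rfl fun f _ => (neg_smul (w f) _).symm

lemma chain_sum {M : Type*} [AddCommGroup M] (q : Fin (n+1)) (w : (S.N q).E → ℤ)
    (g : Bas S → M) :
    ((chain S q w).sum fun b m => m • g b) = ∑ f : (S.N q).E, w f • g ⟨q, f⟩ := by
  unfold chain
  rw [← Finsupp.sum_finset_sum_index (fun a => zero_zsmul (g a))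
    (fun a b₁ b₂ => add_zsmul (g a) b₁ b₂)]
  refine Finset.sum_congr rfl fun f _ => ?_
  rw [Finsupp.smul_single, smul_eq_mul, mul_one, Finsupp.sum_single_index]
  exact zero_zsmul _

lemma sum_smul_chain {ι : Type*} [Fintype ι] (q : Fin (n+1)) (u : ι → ℤ)
    (w : ι → (S.N q).E → ℤ) :
    (∑ x : ι, u x • chain S q (w x)) = chain S q (fun f => ∑ x : ι, u x * w x f) := by
  unfold chain
  calc (∑ x : ι, u x • ∑ f : (S.N q).E, w x f • (Finsupp.single (⟨q, f⟩ : Bas S) 1 : Bas S →₀ ℤ))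
      = ∑ x : ι, ∑ f : (S.N q).E, (u x * w x f) • (Finsupp.single (⟨q, f⟩ : Bas S) 1 : Bas S →₀ ℤ) := by
        refine Finset.sum_congr rfl fun x _ => ?_
        rw [Finset.smul_sum]
        exact Finset.sum_congr rfl fun f _ => smul_smul (u x) (w x f) _
    _ = ∑ f : (S.N q).E, ∑ x : ι, (u x * w x f) • (Finsupp.single (⟨q, f⟩ : Bas S) 1 : Bas S →₀ ℤ) :=
        Finset.sum_comm
    _ = ∑ f : (S.N q).E, (∑ x : ι, u x * w x f) • (Finsupp.single (⟨q, f⟩ : Bas S) 1 : Bas S →₀ ℤ) := by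
        refine Finset.sum_congr rfl fun f _ => ?_
        rw [Finset.sum_smul]

/-- The level-wise boundary coefficients. -/
noncomputable def kap (q' : Fin n) (e : (S.N q'.succ).E) :
    (S.N q'.castSucc).E → ℤ :=
  kA (S.c q') e

/-- The boundary of a basis element. -/
noncomputable def bdB : Bas S → (Bas S →₀ ℤ) := fun a =>
  Fin.cases (motive := fun q => (S.N q).E → (Bas S →₀ ℤ))
    (fun _ => 0) (fun q' e => chain S q'.castSucc (kap S q' e)) a.1 a.2

lemma bdB_zero (e : (S.N 0).E) : bdB S ⟨0, e⟩ = 0 :=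
  congrFun (Fin.cases_zero (motive := fun q => (S.N q).E → (Bas S →₀ ℤ))) e

lemma bdB_succ (q' : Fin n) (e : (S.N q'.succ).E) :
    bdB S ⟨q'.succ, e⟩ = chain S q'.castSucc (kap S q' e) :=
  congrFun (Fin.cases_succ (motive := fun q => (S.N q).E → (Bas S →₀ ℤ)) q') e

/-- The augmentation on basis elements. -/
def epsB : Bas S → ℤ := fun a => if a.1.1 = 0 then 1 else 0

lemma repr_cases (P : Bas S → Prop)
    (h0 : ∀ e : (S.N 0).E, P ⟨0, e⟩)
    (hs : ∀ (q' : Fin n) (e : (S.N q'.succ).E), P ⟨q'.succ, e⟩) :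
    ∀ a : Bas S, P a := by
  rintro ⟨q, e⟩
  revert e
  exact Fin.cases h0 hs q

lemma fin_zero_or_succ (q : Fin (n+1)) : q = 0 ∨ ∃ p : Fin n, q = p.succ := by
  induction q using Fin.cases with
  | zero => exact Or.inl rfl
  | succ p => exact Or.inr ⟨p, rfl⟩

lemma bdB_fiber0 {q : Fin (n+1)} (hq : q = 0) (e : (S.N q).E) : bdB S ⟨q, e⟩ = 0 := by
  subst hq
  exact bdB_zero S e

lemma bdB_fiberS {q : Fin (n+1)} {p : Fin n} (hq : q = p.succ) (e : (S.N q).E) :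
    bdB S ⟨q, e⟩ = chain S p.castSucc
      (kap S p (cast (congrArg (fun i => (S.N i).E) hq) e)) := by
  subst hq
  exact bdB_succ S p e

lemma idx_cast_src {q r : Fin (n+1)} (h : q = r) (f : (S.N r).E) :
    (S.N q).src (cast (congrArg (fun i => (S.N i).E) h.symm) f)
      = Option.map (cast (congrArg (fun i => (S.N i).V) h.symm)) ((S.N r).src f) := by
  subst h
  cases hf : (S.N q).src f <;> simp [hf]

lemma idx_cast_tgt {q r : Fin (n+1)} (h : q = r) (f : (S.N r).E) :
    (S.N q).tgt (cast (congrArg (fun i => (S.N i).E) h.symm) f)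
      = Option.map (cast (congrArg (fun i => (S.N i).V) h.symm)) ((S.N r).tgt f) := by
  subst h
  cases hf : (S.N q).tgt f <;> simp [hf]

lemma con_cast_gen {x y : Fin (n+1)} (h : x = y) (Nu : OpetopicNetwork)
    (cc : (S.N x).V → Nu.E) (hc : IsConstellation (S.N x) Nu cc) :
    IsConstellation (S.N y) Nu
      (fun v => cc (cast (congrArg (fun i => (S.N i).V) h.symm) v)) := by
  subst h
  exact hc

lemma kap_cast (q' p : Fin n) (h : q'.castSucc = p.succ) (e : (S.N q'.succ).E)
    (f₂ : (S.N p.succ).E) :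
    kap S q' e (cast (congrArg (fun i => (S.N i).E) h.symm) f₂)
      = kA (fun v : (S.N p.succ).V =>
          S.c q' (cast (congrArg (fun i => (S.N i).V) h.symm) v)) e f₂ := by
  unfold kap kA
  rw [idx_cast_src S h f₂, idx_cast_tgt S h f₂]
  congr 1 <;> apply b01_congr
  · cases hsf : (S.N p.succ).src f₂ with
    | none => simp
    | some v =>
        simp only [Option.map_some]
        constructor
        · rintro ⟨v', hv', hp⟩
          have : cast (congrArg (fun i => (S.N i).V) h.symm) v = v' := by injection hv'
          exact ⟨v, rfl, by rw [this]; exact hp⟩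
        · rintro ⟨v'', hv'', hp⟩
          have : v = v'' := by injection hv''
          exact ⟨_, rfl, by rw [this]; exact hp⟩
  · cases hsf : (S.N p.succ).tgt f₂ with
    | none => simp
    | some v =>
        simp only [Option.map_some]
        constructor
        · rintro ⟨v', hv', hp⟩
          have : cast (congrArg (fun i => (S.N i).V) h.symm) v = v' := by injection hv'
          exact ⟨v, rfl, by rw [this]; exact hp⟩
        · rintro ⟨v'', hv'', hp⟩
          have : v = v'' := by injection hv''
          exact ⟨_, rfl, by rw [this]; exact hp⟩

end FinLand

section KSsec

variable {n : ℕ} (S : OpetopicSequence n)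

lemma mem_chain_support (q : Fin (n+1)) (w : (S.N q).E → ℤ) (b : Bas S)
    (h : b ∈ (chain S q w).support) : ∃ f, b = ⟨q, f⟩ ∧ w f ≠ 0 := by
  rcases b with ⟨q₂, f₂⟩
  by_cases hq : q₂ = q
  · subst hq
    refine ⟨f₂, rfl, ?_⟩
    have h2 := Finsupp.mem_support_iff.1 h
    rwa [chain_apply_same] at h2
  · have h2 := Finsupp.mem_support_iff.1 h
    rw [chain_apply_ne S q w f₂ hq] at h2
    exact absurd rfl h2

lemma bdbd_heavy (q' p : Fin n) (h : q'.castSucc = p.succ) (e : (S.N q'.succ).E) :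
    (∑ f : (S.N q'.castSucc).E, kap S q' e f • bdB S ⟨q'.castSucc, f⟩) = 0 := by
  have hE : (S.N q'.castSucc).E = (S.N p.succ).E := congrArg (fun i => (S.N i).E) h
  set cc2 : (S.N p.succ).V → (S.N q'.succ).E :=
    fun v => S.c q' (cast (congrArg (fun i => (S.N i).V) h.symm) v) with hcc2
  have hc2 : IsConstellation (S.N p.succ) (S.N q'.succ) cc2 :=
    con_cast_gen S h _ _ (S.constell q')
  calc (∑ f : (S.N q'.castSucc).E, kap S q' e f • bdB S ⟨q'.castSucc, f⟩)
      = ∑ f : (S.N q'.castSucc).E, kap S q' e f •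
          chain S p.castSucc (kap S p (cast (congrArg (fun i => (S.N i).E) h) f)) :=
        Finset.sum_congr rfl fun f _ => by rw [bdB_fiberS S h f]
    _ = ∑ f₂ : (S.N p.succ).E,
          kap S q' e ((Equiv.cast hE).symm f₂) • chain S p.castSucc (kap S p f₂) := by
        refine Fintype.sum_equiv (Equiv.cast hE) _ _ fun f => ?_
        rw [Equiv.symm_apply_apply]
        congr 1
    _ = ∑ f₂ : (S.N p.succ).E, kA cc2 e f₂ • chain S p.castSucc (kap S p f₂) := by
        refine Finset.sum_congr rfl fun f₂ _ => ?_
        congr 1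
        have : (Equiv.cast hE).symm f₂
            = cast (congrArg (fun i => (S.N i).E) h.symm) f₂ := by
          rw [← Equiv.cast_symm, Equiv.cast_apply]
        rw [this]
        exact kap_cast S q' p h e f₂
    _ = chain S p.castSucc (fun hh => ∑ f₂ : (S.N p.succ).E, kA cc2 e f₂ * kap S p f₂ hh) :=
        sum_smul_chain S p.castSucc _ _
    _ = 0 := by
        refine chain_ext_zero S _ _ fun hh => ?_
        have expand : ∀ f₂ : (S.N p.succ).E, kA cc2 e f₂ * kap S p f₂ hh
            = kA cc2 e f₂ * b01 (∃ u, (S.N p.castSucc).src hh = Option.some u ∧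
                (S.N p.succ).toNetwork.PathTo (S.c p u) f₂)
              - kA cc2 e f₂ * b01 (∃ u, (S.N p.castSucc).tgt hh = Option.some u ∧
                (S.N p.succ).toNetwork.PathTo (S.c p u) f₂) := by
          intro f₂
          unfold kap kA
          ring
        rw [Finset.sum_congr rfl fun f₂ _ => expand f₂, Finset.sum_sub_distrib]
        have hXzero : ∀ (sel : (S.N p.castSucc).E → Option (S.N p.castSucc).V),
            (∑ f₂ : (S.N p.succ).E, kA cc2 e f₂ * b01 (∃ u, sel hh = Option.some u ∧
              (S.N p.succ).toNetwork.PathTo (S.c p u) f₂)) = 0 := by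
          intro sel
          cases hs : sel hh with
          | none =>
              refine Finset.sum_eq_zero fun f₂ _ => ?_
              rw [b01_neg, mul_zero]
              rintro ⟨u, hu, _⟩
              cases hu
          | some u =>
              have hcongr : ∀ f₂ : (S.N p.succ).E,
                  kA cc2 e f₂ * b01 (∃ u', Option.some u = Option.some u' ∧
                    (S.N p.succ).toNetwork.PathTo (S.c p u') f₂)
                  = kA cc2 e f₂ * b01 ((S.N p.succ).toNetwork.PathTo (S.c p u) f₂) := by
                intro f₂
                congr 1
                apply b01_congr
                constructor
                · rintro ⟨u', hu', hp⟩
                  have : u = u' := by injection hu'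
                  rw [this]
                  exact hp
                · intro hp
                  exact ⟨u, rfl, hp⟩
              rw [Finset.sum_congr rfl fun f₂ _ => hcongr f₂]
              exact ATERM hc2 e ((S.constell p).1 u)
        rw [hXzero (S.N p.castSucc).src, hXzero (S.N p.castSucc).tgt, sub_self]

/-- The free augmented directed complex associated to an opetopic sequence. -/
@[reducible] noncomputable def KS : FADC where
  B := Bas S
  dim := fun a => a.1.1
  bd := bdB S
  eps := epsB S
  bd_dim := by
    refine repr_cases S _ ?_ ?_
    · intro e b hb
      rw [bdB_zero] at hb
      simp at hb
    · intro q' e b hb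
      rw [bdB_succ] at hb
      obtain ⟨f, rfl, -⟩ := mem_chain_support S _ _ _ hb
      simp
  eps_dim := by
    intro b hb
    have hb' : 0 < b.1.1 := hb
    unfold epsB
    rw [if_neg]
    omega
  bd_bd := by
    refine repr_cases S _ ?_ ?_
    · intro e
      rw [bdB_zero, Finsupp.sum_zero_index]
    · intro q' e
      rw [bdB_succ, chain_sum]
      rcases fin_zero_or_succ q'.castSucc with h | ⟨p, h⟩
      · exact Finset.sum_eq_zero fun f _ => by rw [bdB_fiber0 S h, smul_zero]
      · exact bdbd_heavy S q' p h e
  eps_bd := by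
    refine repr_cases S _ ?_ ?_
    · intro e
      rw [bdB_zero, Finsupp.sum_zero_index]
    · intro q' e
      have hmul : ((chain S q'.castSucc (kap S q' e)).sum fun b m => m * epsB S b)
          = (chain S q'.castSucc (kap S q' e)).sum fun b m => m • epsB S b := by
        refine Finsupp.sum_congr fun b _ => ?_
        rw [smul_eq_mul]
      rw [bdB_succ, hmul, chain_sum]
      by_cases hq : (q'.castSucc : ℕ) = 0
      · have hlin : (S.N q'.castSucc).toNetwork.Linear := by
          have h0 : q'.castSucc = (0 : Fin (n+1)) := Fin.ext (by simpa using hq)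
          rw [h0]
          exact S.linear0
        have hz := sum_kA_zero (S.constell q') (lin_in_unique _ hlin) e
        calc (∑ f : (S.N q'.castSucc).E, kap S q' e f • epsB S ⟨q'.castSucc, f⟩)
            = ∑ f : (S.N q'.castSucc).E, kap S q' e f := by
              refine Finset.sum_congr rfl fun f _ => ?_
              have : epsB S ⟨q'.castSucc, f⟩ = 1 := by
                unfold epsB
                rw [if_pos hq]
              rw [this, smul_eq_mul, mul_one]
          _ = 0 := hz
      · refine Finset.sum_eq_zero fun f _ => ?_
        have : epsB S ⟨q'.castSucc, f⟩ = 0 := by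
          unfold epsB
          rw [if_neg hq]
        rw [this, smul_zero]

end KSsec

section Comp

variable {n : ℕ} (S : OpetopicSequence n)

lemma KS_bdc_single (a : Bas S) :
    (KS S).bdc (Finsupp.single a 1) = bdB S a := (KS S).bdc_single a

lemma mapRange_chain (q : Fin (n+1)) (w : (S.N q).E → ℤ) (F : ℤ → ℤ) (hF : F 0 = 0) :
    Finsupp.mapRange F hF (chain S q w) = chain S q (fun f => F (w f)) := by
  ext b
  rw [Finsupp.mapRange_apply]
  rcases b with ⟨q₂, f₂⟩
  by_cases hq : q₂ = q
  · subst hq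
    rw [chain_apply_same, chain_apply_same]
  · rw [chain_apply_ne S q w f₂ hq, chain_apply_ne S q _ f₂ hq, hF]

lemma bdp_single_succ (q' : Fin n) (e : (S.N q'.succ).E) :
    (KS S).bdp (Finsupp.single (⟨q'.succ, e⟩ : Bas S) 1)
      = Finsupp.single (⟨q'.castSucc, dE (S.constell q') e⟩ : Bas S) 1 := by
  unfold FADC.bdp
  rw [KS_bdc_single, bdB_succ, mapRange_chain]
  unfold kap
  rw [chain_congr S q'.castSucc _ _ (fun f => kA_pos (S.constell q') e f)]
  exact chain_delta S q'.castSucc _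

lemma bdm_single_succ (q' : Fin n) (e : (S.N q'.succ).E) :
    (KS S).bdm (Finsupp.single (⟨q'.succ, e⟩ : Bas S) 1)
      = chain S q'.castSucc (fun f =>
          b01 ((∃ v, (S.N q'.castSucc).tgt f = Option.some v ∧
              (S.N q'.succ).toNetwork.PathTo (S.c q' v) e) ∧
            ¬(∃ v, (S.N q'.castSucc).src f = Option.some v ∧
              (S.N q'.succ).toNetwork.PathTo (S.c q' v) e))) := by
  unfold FADC.bdm
  rw [KS_bdc_single, bdB_succ, neg_chain, mapRange_chain]
  exact chain_congr S q'.castSucc _ _ (fun f => kA_neg e f)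

lemma bdp_single_fiber0 {q : Fin (n+1)} (hq : q = 0) (e : (S.N q).E) :
    (KS S).bdp (Finsupp.single (⟨q, e⟩ : Bas S) 1) = 0 := by
  unfold FADC.bdp
  rw [KS_bdc_single, bdB_fiber0 S hq]
  simp

lemma bdm_single_fiber0 {q : Fin (n+1)} (hq : q = 0) (e : (S.N q).E) :
    (KS S).bdm (Finsupp.single (⟨q, e⟩ : Bas S) 1) = 0 := by
  unfold FADC.bdm
  rw [KS_bdc_single, bdB_fiber0 S hq]
  simp

lemma fiber_pos : ∀ b : Bas S, 0 < b.1.1 →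
    ∃ (q' : Fin n) (e : (S.N q'.succ).E), b = ⟨q'.succ, e⟩ := by
  refine repr_cases S _ ?_ ?_
  · intro e h
    simp at h
  · intro q' e _
    exact ⟨q', e, rfl⟩

lemma bdp_single_dim0 (b : Bas S) (hb : b.1.1 = 0) :
    (KS S).bdp (Finsupp.single b 1) = 0 := by
  rcases b with ⟨q, e⟩
  exact bdp_single_fiber0 S (Fin.ext (by simpa using hb)) e

lemma bdm_single_dim0 (b : Bas S) (hb : b.1.1 = 0) :
    (KS S).bdm (Finsupp.single b 1) = 0 := by
  rcases b with ⟨q, e⟩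
  exact bdm_single_fiber0 S (Fin.ext (by simpa using hb)) e

lemma bdp_iter_single : ∀ (r : ℕ) (a : Bas S), r ≤ a.1.1 →
    ∃ b : Bas S, b.1.1 + r = a.1.1 ∧
      (KS S).bdp^[r] (Finsupp.single a 1) = Finsupp.single b 1 := by
  intro r
  induction r with
  | zero => exact fun a _ => ⟨a, rfl, rfl⟩
  | succ r ih =>
      intro a hra
      obtain ⟨b, hb1, hb2⟩ := ih a (le_trans (Nat.le_succ r) hra)
      have hbpos : 0 < b.1.1 := by omega
      obtain ⟨q', e, rfl⟩ := fiber_pos S b hbpos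
      refine ⟨⟨q'.castSucc, dE (S.constell q') e⟩, ?_, ?_⟩
      · have h1 : (q'.castSucc : ℕ) = q'.1 := rfl
        have h2 : (q'.succ : ℕ) = q'.1 + 1 := rfl
        simp only [h1] at *
        omega
      · rw [(KS S).bdp_iter_succ, hb2, bdp_single_succ]

lemma bdp_iter_ge (r : ℕ) (a : Bas S) (h : a.1.1 < r) :
    (KS S).bdp^[r] (Finsupp.single a 1) = 0 := by
  obtain ⟨b, hb1, hb2⟩ := bdp_iter_single S a.1.1 a le_rfl
  obtain ⟨s, rfl⟩ : ∃ s, r = s + (1 + a.1.1) := ⟨r - a.1.1 - 1, by omega⟩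
  rw [Function.iterate_add_apply, Function.iterate_add_apply, hb2,
    Function.iterate_one, bdp_single_dim0 S b (by omega)]
  exact Function.iterate_fixed ((KS S).bdp_zero) s

lemma bdm_iter_ge (r : ℕ) (a : Bas S) (h : a.1.1 < r) :
    (KS S).bdm^[r] (Finsupp.single a 1) = 0 := by
  obtain ⟨s, rfl⟩ : ∃ s, r = s + 1 := ⟨r - 1, by omega⟩
  rw [show s + 1 = s + 1 from rfl]
  induction s with
  | zero =>
      rw [Function.iterate_one]
      have : a.1.1 = 0 := by omega
      exact bdm_single_dim0 S a this
  | succ s ih =>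
      rw [(KS S).bdm_iter]
      by_cases hs : a.1.1 < s + 1
      · rw [bdp_iter_ge S (s+1) a hs, (KS S).bdm_zero]
      · have : a.1.1 = s + 1 := by omega
        obtain ⟨b, hb1, hb2⟩ := bdp_iter_single S (s+1) a (by omega)
        rw [hb2]
        exact bdm_single_dim0 S b (by omega)

lemma epsc_chain (q : Fin (n+1)) (w : (S.N q).E → ℤ) :
    (KS S).epsc (chain S q w) = ∑ f : (S.N q).E, w f * epsB S ⟨q, f⟩ := by
  calc (KS S).epsc (chain S q w)
      = (chain S q w).sum fun b m => m • epsB S b :=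
        Finsupp.sum_congr fun b _ => by rw [smul_eq_mul]; try rfl
    _ = ∑ f : (S.N q).E, w f • epsB S ⟨q, f⟩ := chain_sum S q w _
    _ = ∑ f : (S.N q).E, w f * epsB S ⟨q, f⟩ :=
        Finset.sum_congr rfl fun f _ => by rw [smul_eq_mul]

lemma epsc_single' (b : Bas S) :
    (KS S).epsc (Finsupp.single b 1) = epsB S b := by
  rw [(KS S).epsc_single, one_mul]
  try rfl

lemma eps_bdm_one (p : Fin n) (hp : (p.castSucc : ℕ) = 0) (e₂ : (S.N p.succ).E) :
    (KS S).epsc ((KS S).bdm (Finsupp.single (⟨p.succ, e₂⟩ : Bas S) 1)) = 1 := by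
  rw [bdm_single_succ, epsc_chain]
  have hlin : (S.N p.castSucc).toNetwork.Linear := by
    have h0 : p.castSucc = (0 : Fin (n+1)) := Fin.ext (by simpa using hp)
    rw [h0]
    exact S.linear0
  calc (∑ f : (S.N p.castSucc).E, b01 ((∃ v, (S.N p.castSucc).tgt f = Option.some v ∧
          (S.N p.succ).toNetwork.PathTo (S.c p v) e₂) ∧
        ¬(∃ v, (S.N p.castSucc).src f = Option.some v ∧
          (S.N p.succ).toNetwork.PathTo (S.c p v) e₂)) * epsB S ⟨p.castSucc, f⟩)
      = ∑ f : (S.N p.castSucc).E,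
          (max (kA (S.c p) e₂ f) 0 - kA (S.c p) e₂ f) := by
        refine Finset.sum_congr rfl fun f _ => ?_
        have heps : epsB S ⟨p.castSucc, f⟩ = 1 := if_pos hp
        rw [heps, mul_one, ← kA_neg e₂ f]
        omega
    _ = 1 - 0 := by
        rw [Finset.sum_sub_distrib, sum_maxkA (S.constell p) e₂,
          sum_kA_zero (S.constell p) (lin_in_unique _ hlin) e₂]
    _ = 1 := by norm_num

lemma KS_unital : (KS S).Unital := by
  refine repr_cases S _ ?_ ?_
  · intro e
    have hd : (KS S).dim ⟨(0 : Fin (n+1)), e⟩ = 0 := by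
      show ((0 : Fin (n+1)) : ℕ) = 0
      simp
    rw [hd]
    constructor <;>
      · rw [Function.iterate_zero_apply, epsc_single']
        exact if_pos (by simp)
  · intro q' e
    have hd : (KS S).dim ⟨q'.succ, e⟩ = q'.1 + 1 := rfl
    rw [hd]
    constructor
    · rw [(KS S).bdm_iter]
      obtain ⟨b, hb1, hb2⟩ := bdp_iter_single S q'.1 ⟨q'.succ, e⟩ (by exact Nat.le_succ _)
      rw [hb2]
      have hb1' : b.1.1 + q'.1 = q'.1 + 1 := hb1
      have hbpos : 0 < b.1.1 := by omega
      obtain ⟨p, e₂, rfl⟩ := fiber_pos S b hbpos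
      have hb1'' : p.1 + 1 + q'.1 = q'.1 + 1 := hb1'
      have hp0 : (p.castSucc : ℕ) = 0 := by
        show p.1 = 0
        omega
      exact eps_bdm_one S p hp0 e₂
    · obtain ⟨b, hb1, hb2⟩ := bdp_iter_single S (q'.1 + 1) ⟨q'.succ, e⟩ (le_refl _)
      rw [hb2, epsc_single']
      have hb1' : b.1.1 + (q'.1 + 1) = q'.1 + 1 := hb1
      exact if_pos (by omega)

end Comp

section Loop

variable {n : ℕ} (S : OpetopicSequence n)

lemma b01_ne_zero {p : Prop} (h : b01 p ≠ 0) : p := by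
  by_cases hp : p
  · exact hp
  · exact absurd (b01_neg hp) h

/-- The strict order witnessing loop-freeness. -/
def ltB : Bas S → Bas S → Prop := fun a b =>
  ∃ h : a.1 = b.1, Relation.TransGen (S.N b.1).toNetwork.step
    (cast (congrArg (fun i => (S.N i).E) h) a.2) b.2

lemma ltB_irrefl : ∀ a : Bas S, ¬ ltB S a a := by
  rintro ⟨q, e⟩ ⟨h, hp⟩
  exact (S.N q).acyclic e hp

lemma ltB_trans : ∀ a b c : Bas S, ltB S a b → ltB S b c → ltB S a c := by
  rintro ⟨qa, ea⟩ ⟨qb, eb⟩ ⟨qc, ec⟩ ⟨h1, p1⟩ ⟨h2, p2⟩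
  dsimp only at h1 h2
  subst h2
  subst h1
  exact ⟨rfl, p1.trans p2⟩

lemma mem_single_support {b b' : Bas S}
    (h : b ∈ (Finsupp.single b' (1 : ℤ)).support) : b = b' := by
  have h2 := Finsupp.mem_support_iff.1 h
  by_contra hne
  rw [Finsupp.single_eq_of_ne' (Ne.symm hne)] at h2
  exact h2 rfl

lemma KS_loopfree : (KS S).LoopFree := by
  have isso : IsStrictOrder (Bas S) (ltB S) :=
    { irrefl := ltB_irrefl S, trans := ltB_trans S }
  refine ⟨ltB S, isso, ?_⟩
  intro a r hr b hb b' hb'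
  by_cases hra : r ≤ a.1.1
  · obtain ⟨s, rfl⟩ : ∃ s, r = s + 1 := ⟨r - 1, by omega⟩
    rw [(KS S).bdm_iter] at hb
    obtain ⟨t, ht1, ht2⟩ := bdp_iter_single S s a (by omega)
    rw [ht2] at hb
    have htpos : 0 < t.1.1 := by omega
    obtain ⟨p, e₂, rfl⟩ := fiber_pos S t htpos
    rw [bdm_single_succ] at hb
    obtain ⟨f, rfl, hw⟩ := mem_chain_support S _ _ _ hb
    obtain ⟨⟨v, htf, hWv⟩, -⟩ := b01_ne_zero hw
    rw [(KS S).bdp_iter_succ, ht2, bdp_single_succ] at hb'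
    have hb'eq := mem_single_support S hb'
    subst hb'eq
    exact ⟨rfl, inedge_to_dE (S.constell p) e₂ htf hWv⟩
  · rw [bdm_iter_ge S r a (by omega)] at hb
    simp at hb

lemma OUPex (q' : Fin n) :
    ∀ u : (S.N q'.succ).V, ∃ z, (S.N q'.succ).src z = Option.some u := by
  by_cases h : q'.1 + 1 < n
  · intro u
    obtain ⟨f, hf, -⟩ := OU_con (S.constell ⟨q'.1 + 1, h⟩) u
    exact ⟨f, hf⟩
  · have hlast : q'.succ = Fin.last n := Fin.ext (by simp; omega)
    have hempty : IsEmpty (S.N q'.succ).V := by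
      rw [hlast]
      exact S.top_noV
    exact fun u => (hempty.elim u)

/-- The output edge at each level. -/
noncomputable def oE (q : Fin (n+1)) : (S.N q).E := oEdge (S.N q)

lemma W_univ (q' : Fin n) (v : (S.N q'.castSucc).V) :
    (S.N q'.succ).toNetwork.PathTo (S.c q' v) (oE S q'.succ) :=
  W_output (S.constell q') (OUPex S q') v

lemma dE_oE (q' : Fin n) : dE (S.constell q') (oE S q'.succ) = oE S q'.castSucc :=
  dE_output (S.constell q') (OUPex S q')

lemma src_oE_ne (q' : Fin n) : (S.N q'.castSucc).src (oE S q'.castSucc) ≠ none :=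
  out_src_ne (S.constell q')

/-- The top edge. -/
noncomputable def gE : (S.N (Fin.last n)).E := S.top_single.choose

lemma gE_unique : ∀ e : (S.N (Fin.last n)).E, e = gE S :=
  fun e => S.top_single.choose_spec.2 e trivial

lemma gE_eq_oE : gE S = oE S (Fin.last n) := (gE_unique S (oE S (Fin.last n))).symm

lemma src_gE : (S.N (Fin.last n)).src (gE S) = none := by
  by_cases hn : n = 0
  · obtain ⟨-, k, e, vq, h0, -, -⟩ := S.linear0
    have hq : Fin.last n = (0 : Fin (n+1)) := Fin.ext (by simp [hn])
    have hsrc := idx_cast_src S hq (e 0)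
    rw [h0] at hsrc
    have hgE := gE_unique S (cast (congrArg (fun i => (S.N i).E) hq.symm) (e 0))
    rw [← hgE, hsrc]
    rfl
  · set q'' : Fin n := ⟨n - 1, by omega⟩ with hq''
    have hsq : Fin.last n = q''.succ := Fin.ext (by simp [hq'']; omega)
    obtain ⟨v⟩ := VNl_nonempty (S.constell q'')
    have hin := (S.constell q'').1 v
    have hsrc := idx_cast_src S hsq (S.c q'' v)
    rw [hin] at hsrc
    have hgE := gE_unique S (cast (congrArg (fun i => (S.N i).E) hsq.symm) (S.c q'' v))
    rw [← hgE, hsrc]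
    rfl

lemma bdp_iter_g (r : ℕ) (hr : r ≤ n) :
    (KS S).bdp^[r] (Finsupp.single (⟨Fin.last n, gE S⟩ : Bas S) 1)
      = Finsupp.single (⟨⟨n - r, by omega⟩, oE S ⟨n - r, by omega⟩⟩ : Bas S) 1 := by
  induction r with
  | zero =>
      rw [Function.iterate_zero_apply, gE_eq_oE]
      rfl
  | succ r ih =>
      have hr' : r ≤ n := le_trans (Nat.le_succ r) hr
      rw [(KS S).bdp_iter_succ, ih hr']
      have hp : n - r - 1 < n := by omega
      set p : Fin n := ⟨n - r - 1, hp⟩ with hpdef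
      have hidx : (⟨n - r, by omega⟩ : Fin (n+1)) = p.succ := Fin.ext (by simp [hpdef]; omega)
      rw [show (Finsupp.single (⟨(⟨n - r, by omega⟩ : Fin (n+1)),
            oE S ⟨n - r, by omega⟩⟩ : Bas S) 1 : Bas S →₀ ℤ)
          = Finsupp.single (⟨p.succ, oE S p.succ⟩ : Bas S) 1 from by rw [hidx]]
      rw [bdp_single_succ, dE_oE]
      rfl

/-- The chain of input edges at a level. -/
noncomputable def inputChain (q : Fin (n+1)) : Bas S →₀ ℤ :=
  chain S q (fun f => b01 ((S.N q).src f = none))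

lemma atomNeg_eq (q : Fin (n+1)) :
    (KS S).atomNeg (⟨Fin.last n, gE S⟩ : Bas S) n q.1 = inputChain S q := by
  unfold FADC.atomNeg
  rw [if_pos (by omega : q.1 ≤ n)]
  by_cases hq : q.1 = n
  · rw [show n - q.1 = 0 by omega, Function.iterate_zero_apply]
    have hlast : q = Fin.last n := Fin.ext (by simpa using hq)
    subst hlast
    unfold inputChain
    rw [← chain_delta S (Fin.last n) (gE S)]
    apply chain_congr
    intro f
    have hf : f = gE S := gE_unique S f
    subst hf
    rw [b01_pos rfl, b01_pos (src_gE S)]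
  · have hlt : q.1 < n := by omega
    obtain ⟨s, hs⟩ : ∃ s, n - q.1 = s + 1 := ⟨n - q.1 - 1, by omega⟩
    rw [hs, (KS S).bdm_iter, bdp_iter_g S s (by omega)]
    set q₂ : Fin n := ⟨q.1, hlt⟩ with hq₂
    have hidx : (⟨n - s, by omega⟩ : Fin (n+1)) = q₂.succ := Fin.ext (by simp [hq₂]; omega)
    rw [show (Finsupp.single (⟨(⟨n - s, by omega⟩ : Fin (n+1)),
          oE S ⟨n - s, by omega⟩⟩ : Bas S) 1 : Bas S →₀ ℤ)
        = Finsupp.single (⟨q₂.succ, oE S q₂.succ⟩ : Bas S) 1 from by rw [hidx]]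
    rw [bdm_single_succ]
    have hic : inputChain S q = inputChain S q₂.castSucc := rfl
    rw [hic]
    apply chain_congr
    intro f
    apply b01_congr
    have hWall : ∀ v, (S.N q₂.succ).toNetwork.PathTo (S.c q₂ v) (oE S q₂.succ) := W_univ S q₂
    constructor
    · rintro ⟨⟨v, htf, -⟩, hnsrc⟩
      cases hsf : (S.N q₂.castSucc).src f with
      | none => rfl
      | some w => exact absurd ⟨w, hsf, hWall w⟩ hnsrc
    · intro hsrc
      constructor
      · cases htf : (S.N q₂.castSucc).tgt f with
        | none =>
            have hfo : f = oE S q₂.castSucc := oEdge_unique _ f htf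
            rw [hfo] at hsrc
            exact absurd hsrc (src_oE_ne S q₂)
        | some v => exact ⟨v, rfl, hWall v⟩
      · rintro ⟨w, hw, -⟩
        rw [hsrc] at hw
        cases hw

end Loop

section GchSec

variable {n : ℕ} (S : OpetopicSequence n)

lemma gch_eq (q : Fin (n+1)) :
    (KS S).gch ((KS S).atomNeg (⟨Fin.last n, gE S⟩ : Bas S) n q.1)
        ((KS S).atomNeg (⟨Fin.last n, gE S⟩ : Bas S) n (q.1+1))
      = chain S q (fun _ => (1:ℤ)) := by
  classical
  unfold FADC.gch
  by_cases hq : q.1 = n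
  · have hz : (KS S).atomNeg (⟨Fin.last n, gE S⟩ : Bas S) n (q.1+1) = 0 := by
      unfold FADC.atomNeg
      rw [if_neg (by omega)]
    rw [hz, Finsupp.sum_zero_index, add_zero, atomNeg_eq]
    unfold inputChain
    apply chain_congr
    intro f
    have hlast : q = Fin.last n := Fin.ext (by simpa using hq)
    subst hlast
    rw [show f = gE S from gE_unique S f, b01_pos (src_gE S)]
  · have hlt : q.1 < n := by omega
    set q₂ : Fin n := ⟨q.1, hlt⟩ with hq₂
    have h2 : (KS S).atomNeg (⟨Fin.last n, gE S⟩ : Bas S) n (q.1+1)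
        = inputChain S q₂.succ := atomNeg_eq S q₂.succ
    rw [h2, atomNeg_eq S q]
    unfold inputChain
    rw [show ((chain S q₂.succ fun f => b01 ((S.N q₂.succ).src f = none)).sum
          fun (b : (KS S).B) (m : ℤ) => m • (KS S).bdp (Finsupp.single b 1))
        = ∑ f₂ : (S.N q₂.succ).E, b01 ((S.N q₂.succ).src f₂ = none) •
            (KS S).bdp (Finsupp.single (⟨q₂.succ, f₂⟩ : Bas S) 1)
      from chain_sum S q₂.succ _ (fun b => (KS S).bdp (Finsupp.single b 1))]
    have h3 : (∑ f₂ : (S.N q₂.succ).E, b01 ((S.N q₂.succ).src f₂ = none) •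
          (KS S).bdp (Finsupp.single (⟨q₂.succ, f₂⟩ : Bas S) 1))
        = ∑ v : (S.N q₂.castSucc).V,
            Finsupp.single (⟨q₂.castSucc, outC (S.constell q₂) v⟩ : Bas S) (1:ℤ) := by
      calc (∑ f₂ : (S.N q₂.succ).E, b01 ((S.N q₂.succ).src f₂ = none) •
            (KS S).bdp (Finsupp.single (⟨q₂.succ, f₂⟩ : Bas S) 1))
          = ∑ f₂ : (S.N q₂.succ).E, b01 ((S.N q₂.succ).src f₂ = none) •
              (Finsupp.single (⟨q₂.castSucc, dE (S.constell q₂) f₂⟩ : Bas S) (1:ℤ)) := by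
            refine Finset.sum_congr rfl fun f₂ _ => ?_
            rw [bdp_single_succ]
        _ = ∑ v : (S.N q₂.castSucc).V,
              Finsupp.single (⟨q₂.castSucc, dE (S.constell q₂) (S.c q₂ v)⟩ : Bas S) (1:ℤ) :=
            sum_inputs_smul (S.constell q₂) _
        _ = ∑ v : (S.N q₂.castSucc).V,
              Finsupp.single (⟨q₂.castSucc, outC (S.constell q₂) v⟩ : Bas S) (1:ℤ) := by
            refine Finset.sum_congr rfl fun v _ => ?_
            rw [dcc_eq_out]
    rw [h3]
    ext b
    rcases b with ⟨q₃, f⟩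
    rw [Finsupp.add_apply, Finsupp.finset_sum_apply]
    by_cases h₃ : q₃ = q
    · subst h₃
      rw [chain_apply_same, chain_apply_same]
      cases hsf : (S.N q₃).src f with
      | none =>
          rw [b01_pos rfl, Finset.sum_eq_zero]
          · norm_num
          · intro v _
            rw [Finsupp.single_apply, if_neg]
            intro hh
            injection hh with _ h2
            have hsv := src_outC (S.constell q₂) v
            rw [h2] at hsv
            have hsf' : (S.N q₂.castSucc).src f = none := hsf
            rw [hsf'] at hsv
            cases hsv
      | some v₀ =>
          have hsf' : (S.N q₂.castSucc).src f = Option.some v₀ := hsf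
          have houtC : f = outC (S.constell q₂) v₀ := outC_eq (S.constell q₂) hsf'
          rw [b01_neg (fun (hh : Option.some v₀ = none) => by cases hh)]
          rw [Finset.sum_eq_single_of_mem (show (S.N q₂.castSucc).V from v₀)
            (Finset.mem_univ _)]
          · rw [Finsupp.single_apply, if_pos (by rw [houtC]; exact rfl)]
            norm_num
          · intro v _ hne
            rw [Finsupp.single_apply, if_neg]
            intro hh
            injection hh with _ h2
            have hsv := src_outC (S.constell q₂) v
            rw [h2, hsf'] at hsv
            have hvv : v = v₀ := by
              injection hsv with hvv'
              exact hvv'.symm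
            exact hne hvv
    · rw [chain_apply_ne S q _ f h₃, chain_apply_ne S q _ f h₃, Finset.sum_eq_zero]
      · norm_num
      · intro v _
        rw [Finsupp.single_apply, if_neg]
        intro hh
        injection hh with h1 _
        exact h₃ (by rw [← h1]; exact rfl)

/-- Emptiness of vertices at the top level. -/
lemma V_empty_of_not_lt (q : Fin (n+1)) (hq : ¬ q.1 < n) : IsEmpty (S.N q).V := by
  have hlast : q = Fin.last n := Fin.ext (by have h1 := q.isLt; simp only [Fin.val_last]; omega)
  rw [hlast]
  exact S.top_noV

/-- The vertex-to-basis map of the realization. -/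
noncomputable def eVS (q : Fin (n+1)) : (S.N q).V → Bas S := fun v =>
  if h : q.1 < n then ⟨(⟨q.1, h⟩ : Fin n).succ, S.c ⟨q.1, h⟩ v⟩
  else ((V_empty_of_not_lt S q h).elim v)

lemma eVS_lt {q : Fin (n+1)} (h : q.1 < n) (v : (S.N q).V) :
    eVS S q v = ⟨(⟨q.1, h⟩ : Fin n).succ, S.c ⟨q.1, h⟩ v⟩ := by
  unfold eVS
  rw [dif_pos h]

lemma INex_level (q' : Fin n) :
    ∀ u : (S.N q'.castSucc).V, ∃ f, (S.N q'.castSucc).tgt f = Option.some u := by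
  by_cases h : 0 < q'.1
  · have h0 : (⟨q'.1 - 1, by omega⟩ : Fin n).succ = q'.castSucc := Fin.ext (by simp; omega)
    have hx := vertex_has_in (S.constell ⟨q'.1 - 1, by omega⟩) (OUPex S ⟨q'.1 - 1, by omega⟩)
    rw [h0] at hx
    exact hx
  · have hlin : (S.N q'.castSucc).toNetwork.Linear := by
      have h0 : q'.castSucc = (0 : Fin (n+1)) := Fin.ext (by simp; omega)
      rw [h0]
      exact S.linear0
    intro u
    obtain ⟨f, hf, -⟩ := lin_in_unique _ hlin u
    exact ⟨f, hf⟩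

lemma noThin_fiber (q : Fin (n+1)) (hq : q.1 = 0) : ∀ e, ¬ (S.N q).thinE e := by
  have h0 : q = 0 := Fin.ext (by simpa using hq)
  rw [h0]
  exact S.noThin0

end GchSec

section Main

variable {n : ℕ} (S : OpetopicSequence n)

/-- The thin basis elements. -/
def thinB : Bas S → Prop := fun a => (S.N a.1).thinE a.2

lemma KS_atomic : (KS S).Atomic n := by
  refine ⟨?_, ?_, ?_⟩
  · intro b
    have := b.1.isLt
    show b.1.1 ≤ n
    omega
  · refine ⟨⟨Fin.last n, gE S⟩, ?_, ?_⟩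
    · show ((Fin.last n : Fin (n+1)) : ℕ) = n
      simp
    · rintro ⟨q, e⟩ hqe
      have hq : q = Fin.last n := Fin.ext (by simpa using hqe)
      subst hq
      exact congrArg (fun x => (⟨Fin.last n, x⟩ : Bas S)) (gE_unique S e)
  · rintro ⟨q, e⟩ hdim
    have hlt : q.1 < n := hdim
    set q₂ : Fin n := ⟨q.1, hlt⟩ with hq₂
    cases hsf : (S.N q).src e with
    | some v =>
        refine ⟨⟨q₂.succ, S.c q₂ v⟩, by show q.1 < q.1 + 1; omega, Or.inr ?_⟩
        rw [bdp_single_succ, dcc_eq_out]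
        have hsf' : (S.N q₂.castSucc).src e = Option.some v := hsf
        rw [show outC (S.constell q₂) v = e from (outC_eq (S.constell q₂) hsf').symm]
        rw [Finsupp.mem_support_iff]
        show (Finsupp.single (⟨q₂.castSucc, e⟩ : Bas S) (1:ℤ)) ⟨q₂.castSucc, e⟩ ≠ 0
        rw [Finsupp.single_eq_same]
        norm_num
    | none =>
        cases htf : (S.N q).tgt e with
        | none =>
            exfalso
            have h1 : e = oEdge (S.N q) := oEdge_unique (S.N q) e htf
            apply src_oE_ne S q₂
            show (S.N q).src (oEdge (S.N q)) = none
            rw [← h1]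
            exact hsf
        | some v =>
            refine ⟨⟨q₂.succ, S.c q₂ v⟩, by show q.1 < q.1 + 1; omega, Or.inl ?_⟩
            rw [bdm_single_succ, Finsupp.mem_support_iff]
            show chain S q₂.castSucc _ ⟨q₂.castSucc, e⟩ ≠ 0
            rw [chain_apply_same]
            have htf' : (S.N q₂.castSucc).tgt e = Option.some v := htf
            have hsf' : (S.N q₂.castSucc).src e = none := hsf
            have hnosl : ¬ (∃ w, (S.N q₂.castSucc).src e = Option.some w ∧
                (S.N q₂.succ).toNetwork.PathTo (S.c q₂ w) (S.c q₂ v)) := by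
              rintro ⟨w, hw, -⟩
              rw [hsf'] at hw
              cases hw
            rw [b01_pos ⟨⟨v, htf', Relation.ReflTransGen.refl⟩, hnosl⟩]
            norm_num

lemma KS_thin_pos : ∀ b : Bas S, thinB S b → 0 < (KS S).dim b := by
  refine repr_cases S _ ?_ ?_
  · intro e hthin
    exact absurd hthin (noThin_fiber S 0 (by simp) e)
  · intro q' e _
    show 0 < q'.1 + 1
    omega

lemma KS_bdp_basis : ∀ b : Bas S, 0 < (KS S).dim b →
    ∃ a, ¬ thinB S a ∧ (KS S).bdp (Finsupp.single b 1) = Finsupp.single a 1 := by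
  intro b hb
  obtain ⟨q', e, rfl⟩ := fiber_pos S b hb
  refine ⟨⟨q'.castSucc, dE (S.constell q') e⟩, ?_, bdp_single_succ S q' e⟩
  intro hthin
  obtain ⟨v, hsv, -⟩ := (dE_spec (S.constell q') e).1
  have hnone := (S.N q'.castSucc).thinE_input _ hthin
  rw [hnone] at hsv
  cases hsv

lemma KS_bdm_thin : ∀ b : Bas S, thinB S b →
    ∃ a, ¬ thinB S a ∧ (KS S).bdm (Finsupp.single b 1) = Finsupp.single a 1 := by
  refine repr_cases S _ ?_ ?_
  · intro e hthin
    exact absurd hthin (noThin_fiber S 0 (by simp) e)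
  · intro q' e hthin
    have hsrc : (S.N q'.succ).src e = none := (S.N q'.succ).thinE_input e hthin
    obtain ⟨v, hv⟩ := (S.constell q').2.2.1 e hsrc
    subst hv
    have hthinV : (S.N q'.castSucc).thinV v := ((S.constell q').2.2.2.1 v).2 hthin
    obtain ⟨f₀, hf₀, huf₀⟩ := (S.N q'.castSucc).thinV_unique v hthinV
    refine ⟨⟨q'.castSucc, f₀⟩, ?_, ?_⟩
    · exact fun ht => (S.N q'.castSucc).thinV_nonthin v f₀ hthinV hf₀ ht
    · rw [bdm_single_succ, ← chain_delta S q'.castSucc f₀]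
      apply chain_congr
      intro f
      apply b01_congr
      constructor
      · rintro ⟨⟨w, htw, hpw⟩, -⟩
        have hwv : w = v := (W_cc (S.constell q')).1 hpw
        rw [hwv] at htw
        exact huf₀ f htw
      · rintro rfl
        refine ⟨⟨v, hf₀, Relation.ReflTransGen.refl⟩, ?_⟩
        rintro ⟨w, hw, hpw⟩
        have hwv : w = v := (W_cc (S.constell q')).1 hpw
        rw [hwv] at hw
        exact no_selfloop hf₀ hw

lemma KS_realized : RealizedBy (KS S) (thinB S) n (⟨Fin.last n, gE S⟩ : Bas S) S := by
  refine ⟨fun q ed => ⟨q, ed⟩, eVS S, fun q => ?_, fun q' v => ?_⟩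
  · refine ⟨?_, ?_, ?_, ?_, ?_, ?_, ?_, ?_, ?_, ?_⟩
    · intro ed ed' h
      have h2 := (Sigma.mk.inj_iff.mp h).2
      exact eq_of_heq h2
    · intro ed
      rw [gch_eq S q, Finsupp.mem_support_iff, chain_apply_same]
      norm_num
    · intro b hb
      rw [gch_eq S q] at hb
      obtain ⟨f, rfl, -⟩ := mem_chain_support S _ _ _ hb
      exact ⟨f, rfl⟩
    · by_cases h : q.1 < n
      · intro v v' hvv
        rw [eVS_lt S h, eVS_lt S h] at hvv
        injection hvv with _ h2
        exact (S.constell ⟨q.1, h⟩).2.1 h2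
      · intro v
        exact ((V_empty_of_not_lt S q h).elim v)
    · by_cases h : q.1 < n
      · intro v
        rw [show (KS S).atomNeg (⟨Fin.last n, gE S⟩ : Bas S) n (q.1+1)
            = inputChain S (⟨q.1, h⟩ : Fin n).succ from atomNeg_eq S (⟨q.1, h⟩ : Fin n).succ]
        rw [eVS_lt S h, Finsupp.mem_support_iff]
        unfold inputChain
        rw [chain_apply_same, b01_pos ((S.constell ⟨q.1, h⟩).1 v)]
        norm_num
      · intro v
        exact ((V_empty_of_not_lt S q h).elim v)
    · by_cases h : q.1 < n
      · intro b hb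
        rw [show (KS S).atomNeg (⟨Fin.last n, gE S⟩ : Bas S) n (q.1+1)
            = inputChain S (⟨q.1, h⟩ : Fin n).succ from atomNeg_eq S (⟨q.1, h⟩ : Fin n).succ] at hb
        unfold inputChain at hb
        obtain ⟨f, rfl, hw⟩ := mem_chain_support S _ _ _ hb
        have hsrc : (S.N (⟨q.1, h⟩ : Fin n).succ).src f = none := b01_ne_zero hw
        obtain ⟨v, hv⟩ := (S.constell ⟨q.1, h⟩).2.2.1 f hsrc
        refine ⟨v, ?_⟩
        rw [eVS_lt S h]
        exact congrArg (fun x => (⟨(⟨q.1, h⟩ : Fin n).succ, x⟩ : Bas S)) hv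
      · intro b hb
        rw [show (KS S).atomNeg (⟨Fin.last n, gE S⟩ : Bas S) n (q.1+1) = 0 from by
          unfold FADC.atomNeg; rw [if_neg (by omega)]] at hb
        simp at hb
    · by_cases h : q.1 < n
      · intro ed v
        rw [eVS_lt S h, bdp_single_succ, dcc_eq_out, Finsupp.mem_support_iff]
        constructor
        · intro hsv
          have hsv' : (S.N (⟨q.1, h⟩ : Fin n).castSucc).src ed = Option.some v := hsv
          rw [show ed = outC (S.constell ⟨q.1, h⟩) v from outC_eq (S.constell ⟨q.1, h⟩) hsv']
          show (Finsupp.single (⟨(⟨q.1, h⟩ : Fin n).castSucc,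
            outC (S.constell ⟨q.1, h⟩) v⟩ : Bas S) (1:ℤ)) ⟨(⟨q.1, h⟩ : Fin n).castSucc,
            outC (S.constell ⟨q.1, h⟩) v⟩ ≠ 0
          rw [Finsupp.single_eq_same]
          norm_num
        · intro hne
          have heq := mem_single_support S (Finsupp.mem_support_iff.2 hne)
          injection heq with _ h2
          rw [h2]
          exact src_outC (S.constell ⟨q.1, h⟩) v
      · intro ed v
        exact ((V_empty_of_not_lt S q h).elim v)
    · by_cases h : q.1 < n
      · intro ed v
        rw [eVS_lt S h, bdm_single_succ, Finsupp.mem_support_iff]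
        show _ ↔ chain S (⟨q.1, h⟩ : Fin n).castSucc _ ⟨(⟨q.1, h⟩ : Fin n).castSucc, ed⟩ ≠ 0
        rw [chain_apply_same]
        constructor
        · intro htv
          have htv' : (S.N (⟨q.1, h⟩ : Fin n).castSucc).tgt ed = Option.some v := htv
          have hnosl : ¬ (∃ w, (S.N (⟨q.1, h⟩ : Fin n).castSucc).src ed = Option.some w ∧
              (S.N (⟨q.1, h⟩ : Fin n).succ).toNetwork.PathTo (S.c ⟨q.1, h⟩ w)
                (S.c ⟨q.1, h⟩ v)) := by
            rintro ⟨w, hw, hpw⟩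
            have hwv : w = v := (W_cc (S.constell ⟨q.1, h⟩)).1 hpw
            rw [hwv] at hw
            exact no_selfloop htv' hw
          rw [b01_pos ⟨⟨v, htv', Relation.ReflTransGen.refl⟩, hnosl⟩]
          norm_num
        · intro hne
          obtain ⟨⟨w, htw, hpw⟩, -⟩ := b01_ne_zero hne
          have hwv : w = v := (W_cc (S.constell ⟨q.1, h⟩)).1 hpw
          rw [hwv] at htw
          exact htw
      · intro ed v
        exact ((V_empty_of_not_lt S q h).elim v)
    · intro ed
      exact Iff.rfl
    · by_cases h : q.1 < n
      · intro v
        rw [eVS_lt S h]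
        exact (S.constell ⟨q.1, h⟩).2.2.2.1 v
      · intro v
        exact ((V_empty_of_not_lt S q h).elim v)
  · have h : (q'.castSucc : ℕ) < n := q'.isLt
    rw [eVS_lt S h]
    exact rfl

lemma KS_reduced_iff :
    ODCReduced (KS S) (thinB S) ↔ ∀ q : Fin (n+1), (S.N q).Reduced := by
  classical
  constructor
  · intro hred q e hthin
    obtain ⟨a, hne, hbdm⟩ := hred ⟨q, e⟩ hthin
    by_cases ha0 : a.1.1 = 0
    · exfalso
      rw [bdm_single_dim0 S a ha0] at hbdm
      have h1 := Finsupp.ext_iff.1 hbdm ⟨q, e⟩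
      rw [Finsupp.single_eq_same] at h1
      simp at h1
    · obtain ⟨q'', e', rfl⟩ := fiber_pos S a (by omega)
      rw [bdm_single_succ] at hbdm
      have hq : q = q''.castSucc := by
        by_contra hne2
        have h1 := Finsupp.ext_iff.1 hbdm ⟨q, e⟩
        rw [chain_apply_ne S q''.castSucc _ e hne2, Finsupp.single_eq_same] at h1
        exact one_ne_zero h1.symm
      subst hq
      have H : ∀ f : (S.N q''.castSucc).E,
          ((∃ u, (S.N q''.castSucc).tgt f = Option.some u ∧
              (S.N q''.succ).toNetwork.PathTo (S.c q'' u) e') ∧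
            ¬(∃ u, (S.N q''.castSucc).src f = Option.some u ∧
              (S.N q''.succ).toNetwork.PathTo (S.c q'' u) e')) ↔ f = e := by
        intro f
        have h1 := Finsupp.ext_iff.1 hbdm ⟨q''.castSucc, f⟩
        rw [chain_apply_same] at h1
        constructor
        · intro hC
          rw [b01_pos hC] at h1
          by_contra hfe
          rw [Finsupp.single_apply, if_neg] at h1
          · exact one_ne_zero h1
          · intro hh
            injection hh with _ h2
            exact hfe h2.symm
        · rintro rfl
          rw [Finsupp.single_eq_same] at h1
          exact b01_ne_zero (by rw [h1]; norm_num)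
      exact red_core (S.constell q'') (INex_level S q'') e' e H
  · intro hall b hthin
    rcases b with ⟨q, e⟩
    by_cases hlt : q.1 < n
    · obtain ⟨v, htv, huniq⟩ := hall q e hthin
      set q₂ : Fin n := ⟨q.1, hlt⟩ with hq₂
      refine ⟨⟨q₂.succ, S.c q₂ v⟩, ?_, ?_⟩
      · intro hh
        injection hh with h1 _
        have h2 : q.1 + 1 = q.1 := congrArg Fin.val h1
        omega
      · rw [bdm_single_succ]
        show chain S q₂.castSucc _ = Finsupp.single (⟨q₂.castSucc, e⟩ : Bas S) 1
        rw [← chain_delta S q₂.castSucc e]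
        apply chain_congr
        intro f
        apply b01_congr
        have htv' : (S.N q₂.castSucc).tgt e = Option.some v := htv
        constructor
        · rintro ⟨⟨w, htw, hpw⟩, -⟩
          have hwv : w = v := (W_cc (S.constell q₂)).1 hpw
          rw [hwv] at htw
          exact huniq f htw
        · rintro rfl
          refine ⟨⟨v, htv', Relation.ReflTransGen.refl⟩, ?_⟩
          rintro ⟨w, hw, hpw⟩
          have hwv : w = v := (W_cc (S.constell q₂)).1 hpw
          rw [hwv] at hw
          exact no_selfloop htv' hw
    · obtain ⟨v, -, -⟩ := hall q e hthin
      exact ((V_empty_of_not_lt S q hlt).elim v)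

end Main

/-- Theorem 5.3 (existence part): every `n`-dimensional opetopic sequence is
isomorphic to the sequence `G_0^-(⟨K⟩) → … → G_n^-(⟨K⟩)` for some `n`-dimensional
opetopic directed complex `K`; moreover `K` is reduced iff the sequence is an
`n`-dimensional opetope (i.e. all its networks are reduced). -/
theorem stmt15 (n : ℕ) (S : OpetopicSequence n) :
    ∃ (K : FADC) (thin : K.B → Prop) (g : K.B),
      IsODC K thin n ∧ K.dim g = n ∧ RealizedBy K thin n g S ∧
      (ODCReduced K thin ↔ ∀ q : Fin (n + 1), (S.N q).Reduced) := by
  refine ⟨KS S, thinB S, ⟨Fin.last n, gE S⟩, ?_, ?_, KS_realized S, KS_reduced_iff S⟩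
  · exact ⟨KS_atomic S, KS_loopfree S, KS_unital S, KS_thin_pos S, KS_bdp_basis S,
      KS_bdm_thin S⟩
  · show ((Fin.last n : Fin (n+1)) : ℕ) = n
    simp
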